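/- arXiv:1504.03311 — 5 statements merged into one kernel-verified Lean document; each statement's English description precedes it below -/
import Mathlib

section
/- For every integer n ≥ 1 and all indices 1 ≤ a, b ≤ n, the Jucys–Murphy elements commute: J_a · J_b = J_b · J_a in the group algebra ℂ[S_n]. -/
/-- The Jucys–Murphy element `J_b = ∑_{a < b} (a b)` in the group algebra `ℂ[S_n]`. -/
noncomputable def jucysMurphy (n : ℕ) (b : Fin n) : MonoidAlgebra ℂ (Equiv.Perm (Fin n)) :=
  ∑ a ∈ Finset.univ.filter (fun a : Fin n => a < b),
    MonoidAlgebra.of ℂ (Equiv.Perm (Fin n)) (Equiv.swap a b)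

lemma jucysMurphy_key (n : ℕ) (b : Fin n) (σ : Equiv.Perm (Fin n)) (hb : σ b = b)
    (hlt : ∀ j : Fin n, σ j < b ↔ j < b) :
    MonoidAlgebra.of ℂ (Equiv.Perm (Fin n)) σ * jucysMurphy n b
      = jucysMurphy n b * MonoidAlgebra.of ℂ (Equiv.Perm (Fin n)) σ := by
  unfold jucysMurphy
  rw [Finset.mul_sum, Finset.sum_mul]
  refine Finset.sum_nbij' (fun j => σ j) (fun j => σ⁻¹ j) ?_ ?_ ?_ ?_ ?_
  · intro j hj
    simp only [Finset.mem_filter, Finset.mem_univ, true_and] at hj ⊢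
    exact (hlt j).mpr hj
  · intro j hj
    simp only [Finset.mem_filter, Finset.mem_univ, true_and] at hj ⊢
    rw [← hlt (σ⁻¹ j), Equiv.Perm.coe_inv, Equiv.apply_symm_apply]; exact hj
  · intro j _; simp
  · intro j _; simp
  · intro j _
    rw [← map_mul, ← map_mul]
    congr 1
    have := Equiv.mul_swap_eq_swap_mul σ j b
    rw [hb] at this
    exact this

lemma jucysMurphy_comm_of_lt (n : ℕ) {a b : Fin n} (h : a < b) :
    jucysMurphy n a * jucysMurphy n b = jucysMurphy n b * jucysMurphy n a := by
  rw [jucysMurphy, Finset.sum_mul, Finset.mul_sum]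
  refine Finset.sum_congr rfl fun i hi => ?_
  simp only [Finset.mem_filter, Finset.mem_univ, true_and] at hi
  have hia : i < a := hi
  refine jucysMurphy_key n b (Equiv.swap i a) ?_ ?_
  · exact Equiv.swap_apply_of_ne_of_ne (hia.trans h).ne' h.ne'
  · intro j
    rcases eq_or_ne j i with rfl | hji
    · simp only [Equiv.swap_apply_left]
      exact ⟨fun _ => hia.trans h, fun _ => h⟩
    rcases eq_or_ne j a with rfl | hja
    · simp only [Equiv.swap_apply_right]
      exact ⟨fun _ => h, fun _ => hia.trans h⟩
    · rw [Equiv.swap_apply_of_ne_of_ne hji hja]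

/-- The Jucys–Murphy elements commute pairwise in `ℂ[S_n]`. -/
theorem jucysMurphy_commute (n : ℕ) (hn : 1 ≤ n) (a b : Fin n) :
    jucysMurphy n a * jucysMurphy n b = jucysMurphy n b * jucysMurphy n a := by
  rcases lt_trichotomy a b with h | rfl | h
  · exact jucysMurphy_comm_of_lt n h
  · rfl
  · exact (jucysMurphy_comm_of_lt n h).symm
end

section
/- For every integer n ≥ 1 and every symmetric polynomial f ∈ ℂ[x_1,…,x_n] (i.e. f is invariant under every permutation of its variables), the element f(J_1,…,J_n) of ℂ[S_n], obtained by substituting the Jucys–Murphy element J_b for the variable x_b (this substitution is well defined because the J_b commute pairwise), lies in the center Z(ℂ[S_n]) of the group algebra. -/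
/-- Evaluation of a multivariate polynomial `f ∈ ℂ[x_1,…,x_n]` at the Jucys–Murphy
elements `J_1,…,J_n`, substituting `J_b` for the variable `x_b`.  (Since the `J_b`
commute pairwise, the ordered products appearing here coincide with any other
ordering of the factors.) -/
noncomputable def jmEval (n : ℕ) (f : MvPolynomial (Fin n) ℂ) :
    MonoidAlgebra ℂ (Equiv.Perm (Fin n)) :=
  ∑ m ∈ f.support, f.coeff m • (List.ofFn fun b : Fin n => jucysMurphy n b ^ m b).prod

section AbstractRing

variable {R : Type*} [Ring R] {u P Q : R}

lemma aux_e1 (h1 : u * P = Q * u - 1) (h2 : u * Q = P * u + 1) : Commute u (P + Q) := by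
  show u * (P + Q) = (P + Q) * u
  rw [mul_add, h1, h2, add_mul]; abel

lemma aux_e2 (hPQ : Commute P Q) (h1 : u * P = Q * u - 1) (h2 : u * Q = P * u + 1) :
    Commute u (P * Q) := by
  show u * (P * Q) = P * Q * u
  calc u * (P * Q) = (Q * u - 1) * Q := by rw [← mul_assoc, h1]
    _ = Q * (P * u + 1) - Q := by rw [sub_mul, one_mul, mul_assoc, h2]
    _ = Q * P * u := by rw [mul_add, mul_one, ← mul_assoc]; abel
    _ = P * Q * u := by rw [← hPQ.eq]

lemma aux_pow (hPQ : Commute P Q) (h1 : u * P = Q * u - 1) (h2 : u * Q = P * u + 1) :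
    ∀ k : ℕ, Commute u (P ^ k + Q ^ k) := by
  have he1 := aux_e1 h1 h2
  have he2 := aux_e2 hPQ h1 h2
  intro k
  induction k using Nat.twoStepInduction with
  | zero => simpa using (Commute.one_right u).add_right (Commute.one_right u)
  | one => simpa using he1
  | more k ih ih1 =>
    have e1 : P * Q ^ (k + 1) = P * Q * Q ^ k := by rw [pow_succ', ← mul_assoc]
    have e2 : Q * P ^ (k + 1) = P * Q * P ^ k := by
      rw [(hPQ.symm.pow_right (k + 1)).eq, pow_succ', mul_assoc,
        ← (hPQ.symm.pow_right k).eq, ← mul_assoc]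
    have key : P ^ (k + 2) + Q ^ (k + 2) =
        (P + Q) * (P ^ (k + 1) + Q ^ (k + 1)) - P * Q * (P ^ k + Q ^ k) := by
      rw [add_mul, mul_add, mul_add, mul_add, e1, e2]
      have p1 : P * P ^ (k + 1) = P ^ (k + 2) := (pow_succ' P (k + 1)).symm
      have q1 : Q * Q ^ (k + 1) = Q ^ (k + 2) := (pow_succ' Q (k + 1)).symm
      rw [p1, q1]; abel
    rw [key]
    exact (he1.mul_right ih1).sub_right (he2.mul_right ih)

lemma aux_sym_le (hPQ : Commute P Q) (h1 : u * P = Q * u - 1) (h2 : u * Q = P * u + 1)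
    {a b : ℕ} (hab : a ≤ b) : Commute u (P ^ a * Q ^ b + P ^ b * Q ^ a) := by
  have key : P ^ b * Q ^ a + P ^ a * Q ^ b = (P * Q) ^ a * (P ^ (b - a) + Q ^ (b - a)) := by
    have hb : a + (b - a) = b := Nat.add_sub_cancel' hab
    rw [hPQ.mul_pow, mul_add]
    congr 1
    · rw [mul_assoc, (hPQ.symm.pow_pow a (b - a)).eq, ← mul_assoc, ← pow_add, hb]
    · rw [mul_assoc, ← pow_add, hb]
  rw [add_comm, key]
  exact ((aux_e2 hPQ h1 h2).pow_right a).mul_right (aux_pow hPQ h1 h2 (b - a))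

lemma aux_sym (hPQ : Commute P Q) (h1 : u * P = Q * u - 1) (h2 : u * Q = P * u + 1)
    (a b : ℕ) : Commute u (P ^ a * Q ^ b + P ^ b * Q ^ a) := by
  rcases le_total a b with hab | hab
  · exact aux_sym_le hPQ h1 h2 hab
  · rw [add_comm]; exact aux_sym_le hPQ h1 h2 hab

end AbstractRing
namespace JMAux

variable {n : ℕ}

local notation "of'" => MonoidAlgebra.of ℂ (Equiv.Perm (Fin n))

lemma of_mul_jucysMurphy (σ : Equiv.Perm (Fin n)) (b : Fin n)
    (hb : σ b = b) (hlt : ∀ a : Fin n, a < b ↔ σ a < b) :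
    of' σ * jucysMurphy n b = jucysMurphy n b * of' σ := by
  unfold jucysMurphy
  rw [Finset.mul_sum, Finset.sum_mul]
  have step : ∀ a : Fin n, of' σ * of' (Equiv.swap a b)
      = of' (Equiv.swap (σ a) b) * of' σ := by
    intro a
    rw [← map_mul, ← map_mul]
    congr 1
    have h := Equiv.swap_apply_apply σ a b
    rw [hb] at h
    rw [h, inv_mul_cancel_right]
  simp only [step]
  refine Finset.sum_equiv σ ?_ ?_
  · intro a
    simp only [Finset.mem_filter, Finset.mem_univ, true_and]
    exact hlt a
  · intro a _
    rfl

lemma swap_commute_jucysMurphy {x y b : Fin n} (hx : x ≠ b) (hy : y ≠ b)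
    (hxy : x < b ↔ y < b) :
    Commute (of' (Equiv.swap x y)) (jucysMurphy n b) := by
  refine of_mul_jucysMurphy _ _ (Equiv.swap_apply_of_ne_of_ne hx.symm hy.symm) ?_
  intro a
  rcases eq_or_ne a x with rfl | hax
  · rw [Equiv.swap_apply_left]; exact hxy
  rcases eq_or_ne a y with rfl | hay
  · rw [Equiv.swap_apply_right]; exact hxy.symm
  · rw [Equiv.swap_apply_of_ne_of_ne hax hay]

lemma jucysMurphy_commute (b c : Fin n) : Commute (jucysMurphy n b) (jucysMurphy n c) := by
  have key : ∀ b c : Fin n, b < c → Commute (jucysMurphy n b) (jucysMurphy n c) := by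
    intro b c hbc
    have hJ : jucysMurphy n b = ∑ a ∈ Finset.univ.filter (fun a : Fin n => a < b),
        of' (Equiv.swap a b) := rfl
    rw [hJ]
    refine Commute.sum_left _ _ _ ?_
    intro a ha
    simp only [Finset.mem_filter, Finset.mem_univ, true_and] at ha
    exact swap_commute_jucysMurphy (ne_of_lt (ha.trans hbc)) (ne_of_lt hbc)
      (iff_of_true (ha.trans hbc) hbc)
  rcases lt_trichotomy b c with h | rfl | h
  · exact key b c h
  · rfl
  · exact (key c b h).symm

lemma filter_lt_succ (i j : Fin n) (hij : (j : ℕ) = (i : ℕ) + 1) :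
    Finset.univ.filter (fun a : Fin n => a < j)
      = insert i (Finset.univ.filter (fun a : Fin n => a < i)) := by
  ext a
  simp only [Finset.mem_filter, Finset.mem_univ, true_and, Finset.mem_insert, Fin.lt_def,
    Fin.ext_iff, hij]
  omega

lemma swap_mul_swap_left {a i j : Fin n} (hai : a ≠ i) (haj : a ≠ j) :
    Equiv.swap i j * Equiv.swap a i = Equiv.swap a j * Equiv.swap i j := by
  have h := Equiv.swap_apply_apply (Equiv.swap i j) a i
  rw [Equiv.swap_apply_of_ne_of_ne hai haj, Equiv.swap_apply_left] at h
  rw [h, inv_mul_cancel_right]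

lemma swap_mul_swap_right {a i j : Fin n} (hai : a ≠ i) (haj : a ≠ j) :
    Equiv.swap i j * Equiv.swap a j = Equiv.swap a i * Equiv.swap i j := by
  have h := Equiv.swap_apply_apply (Equiv.swap i j) a j
  rw [Equiv.swap_apply_of_ne_of_ne hai haj, Equiv.swap_apply_right] at h
  rw [h, inv_mul_cancel_right]

lemma of_swap_mul_jm_i (i j : Fin n) (hij : (j : ℕ) = (i : ℕ) + 1) :
    of' (Equiv.swap i j) * jucysMurphy n i = jucysMurphy n j * of' (Equiv.swap i j) - 1 := by
  have hij_lt : i < j := by rw [Fin.lt_def]; omega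
  have hJj : jucysMurphy n j = of' (Equiv.swap i j)
      + ∑ a ∈ Finset.univ.filter (fun a : Fin n => a < i), of' (Equiv.swap a j) := by
    show (∑ a ∈ Finset.univ.filter (fun a : Fin n => a < j), of' (Equiv.swap a j)) = _
    rw [filter_lt_succ i j hij, Finset.sum_insert (by simp)]
  have hstep : of' (Equiv.swap i j) * jucysMurphy n i
      = (∑ a ∈ Finset.univ.filter (fun a : Fin n => a < i), of' (Equiv.swap a j))
        * of' (Equiv.swap i j) := by
    show of' (Equiv.swap i j) * (∑ a ∈ Finset.univ.filter (fun a : Fin n => a < i),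
      of' (Equiv.swap a i)) = _
    rw [Finset.mul_sum, Finset.sum_mul]
    refine Finset.sum_congr rfl fun a ha => ?_
    simp only [Finset.mem_filter, Finset.mem_univ, true_and] at ha
    rw [← map_mul, swap_mul_swap_left (ne_of_lt ha) (ne_of_lt (ha.trans hij_lt)), map_mul]
  have hsum : (∑ a ∈ Finset.univ.filter (fun a : Fin n => a < i), of' (Equiv.swap a j))
      = jucysMurphy n j - of' (Equiv.swap i j) := by
    rw [hJj]; abel
  rw [hstep, hsum, sub_mul, ← map_mul, Equiv.swap_mul_self, map_one]

lemma of_swap_mul_jm_j (i j : Fin n) (hij : (j : ℕ) = (i : ℕ) + 1) :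
    of' (Equiv.swap i j) * jucysMurphy n j = jucysMurphy n i * of' (Equiv.swap i j) + 1 := by
  have hij_lt : i < j := by rw [Fin.lt_def]; omega
  have hstep : of' (Equiv.swap i j) * jucysMurphy n j
      = 1 + (∑ a ∈ Finset.univ.filter (fun a : Fin n => a < i), of' (Equiv.swap a i))
        * of' (Equiv.swap i j) := by
    show of' (Equiv.swap i j) * (∑ a ∈ Finset.univ.filter (fun a : Fin n => a < j),
      of' (Equiv.swap a j)) = _
    rw [filter_lt_succ i j hij, Finset.sum_insert (by simp), mul_add, ← map_mul,
      Equiv.swap_mul_self, map_one, Finset.mul_sum, Finset.sum_mul]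
    congr 1
    refine Finset.sum_congr rfl fun a ha => ?_
    simp only [Finset.mem_filter, Finset.mem_univ, true_and] at ha
    rw [← map_mul, swap_mul_swap_right (ne_of_lt ha) (ne_of_lt (ha.trans hij_lt)), map_mul]
  have hJi : (∑ a ∈ Finset.univ.filter (fun a : Fin n => a < i), of' (Equiv.swap a i))
      = jucysMurphy n i := rfl
  rw [hstep, hJi, add_comm]


lemma ofFn_prod_eq_noncommProd {M : Type*} [Monoid M] {n : ℕ} (f : Fin n → M)
    (H : ((Finset.univ : Finset (Fin n)) : Set (Fin n)).Pairwise (Function.onFun Commute f)) :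
    (List.ofFn f).prod = Finset.univ.noncommProd f H := by
  rw [List.ofFn_eq_map]
  have h2 : (((List.finRange n).toFinset : Finset (Fin n)) : Set (Fin n)).Pairwise
      (Function.onFun Commute f) := by
    rw [List.toFinset_finRange]; exact H
  rw [← Finset.noncommProd_toFinset (List.finRange n) f h2 (List.nodup_finRange n)]
  exact Finset.noncommProd_congr (List.toFinset_finRange n) (fun _ _ => rfl) h2

lemma jmEval_eq_sum_subset (f : MvPolynomial (Fin n) ℂ) {S : Finset ((Fin n) →₀ ℕ)}
    (hS : f.support ⊆ S) :
    jmEval n f = ∑ m ∈ S, f.coeff m • (List.ofFn fun b : Fin n => jucysMurphy n b ^ m b).prod := by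
  refine Finset.sum_subset hS fun m _ hm => ?_
  rw [MvPolynomial.notMem_support_iff.mp hm, zero_smul]

lemma jmEval_add (p q : MvPolynomial (Fin n) ℂ) :
    jmEval n (p + q) = jmEval n p + jmEval n q := by
  rw [jmEval_eq_sum_subset (p + q)
      (MvPolynomial.support_add.trans (Finset.union_subset_union le_rfl le_rfl)),
    jmEval_eq_sum_subset p (Finset.subset_union_left (s₂ := q.support)),
    jmEval_eq_sum_subset q (Finset.subset_union_right (s₁ := p.support)),
    ← Finset.sum_add_distrib]
  refine Finset.sum_congr rfl fun m _ => ?_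
  rw [MvPolynomial.coeff_add, add_smul]

lemma jmEval_smul (c : ℂ) (p : MvPolynomial (Fin n) ℂ) :
    jmEval n (c • p) = c • jmEval n p := by
  rw [jmEval_eq_sum_subset (c • p) (MvPolynomial.support_smul (a := c) (f := p))]
  unfold jmEval
  rw [Finset.smul_sum]
  refine Finset.sum_congr rfl fun m _ => ?_
  rw [MvPolynomial.coeff_smul, smul_assoc]

lemma jmEval_monomial (m : (Fin n) →₀ ℕ) (c : ℂ) :
    jmEval n (MvPolynomial.monomial m c)
      = c • (List.ofFn fun b : Fin n => jucysMurphy n b ^ m b).prod := by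
  rcases eq_or_ne c 0 with rfl | hc
  · rw [zero_smul, map_zero]
    show jmEval n 0 = 0
    unfold jmEval
    rw [MvPolynomial.support_zero, Finset.sum_empty]
  · unfold jmEval
    rw [MvPolynomial.support_monomial, if_neg hc, Finset.sum_singleton,
      MvPolynomial.coeff_monomial, if_pos rfl]


lemma adjacent_commute_jmEval (i j : Fin n) (hij : (j : ℕ) = (i : ℕ) + 1)
    (f : MvPolynomial (Fin n) ℂ) (hf : f.IsSymmetric) :
    Commute (of' (Equiv.swap i j)) (jmEval n f) := by
  have hne : i ≠ j := fun h => by rw [h] at hij; omega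
  have hPQ := jucysMurphy_commute (n := n) i j
  have h1 := of_swap_mul_jm_i i j hij
  have h2 := of_swap_mul_jm_j i j hij
  have hub : ∀ b : Fin n, b ≠ i → b ≠ j → Commute (of' (Equiv.swap i j)) (jucysMurphy n b) := by
    intro b hbi hbj
    refine swap_commute_jucysMurphy hbi.symm hbj.symm ?_
    have e1 : (b : ℕ) ≠ (i : ℕ) := fun h => hbi (Fin.ext h)
    have e2 : (b : ℕ) ≠ (j : ℕ) := fun h => hbj (Fin.ext h)
    rw [Fin.lt_def, Fin.lt_def]
    omega
  have Hcomm : ∀ (S : Finset (Fin n)) (mm : (Fin n) →₀ ℕ),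
      ((S : Set (Fin n))).Pairwise (Function.onFun Commute (fun b => jucysMurphy n b ^ mm b)) :=
    fun S mm x _ y _ _ => (jucysMurphy_commute x y).pow_pow _ _
  set τ : Equiv.Perm (Fin n) := Equiv.swap i j with hτ
  have main : ∀ g : MvPolynomial (Fin n) ℂ,
      Commute (of' (Equiv.swap i j)) (jmEval n (g + MvPolynomial.rename (⇑τ) g)) := by
    intro g
    induction g using MvPolynomial.induction_on' with
    | add p q hp hq =>
      have hre : (p + q) + MvPolynomial.rename (⇑τ) (p + q)
          = (p + MvPolynomial.rename (⇑τ) p) + (q + MvPolynomial.rename (⇑τ) q) := by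
        rw [map_add]; ring
      rw [hre, jmEval_add]
      exact hp.add_right hq
    | monomial m c =>
      rw [MvPolynomial.rename_monomial, jmEval_add, jmEval_monomial, jmEval_monomial, ← smul_add]
      refine Commute.smul_right ?_ c
      set m' := Finsupp.mapDomain (⇑τ) m with hm'
      have hm'app : ∀ x : Fin n, m' x = m (τ x) := by
        intro x
        rw [hm', Finsupp.mapDomain_equiv_apply, Equiv.symm_swap]
      have hm'i : m' i = m j := by rw [hm'app, hτ, Equiv.swap_apply_left]
      have hm'j : m' j = m i := by rw [hm'app, hτ, Equiv.swap_apply_right]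
      have split : ∀ mm : (Fin n) →₀ ℕ,
          (List.ofFn fun b : Fin n => jucysMurphy n b ^ mm b).prod
            = jucysMurphy n i ^ mm i * (jucysMurphy n j ^ mm j *
              ((Finset.univ.erase i).erase j).noncommProd
                (fun b => jucysMurphy n b ^ mm b) (Hcomm _ mm)) := by
        intro mm
        rw [ofFn_prod_eq_noncommProd _ (Hcomm Finset.univ mm),
          ← Finset.mul_noncommProd_erase Finset.univ (Finset.mem_univ i) _ (Hcomm _ mm)]
        congr 1
        exact (Finset.mul_noncommProd_erase (Finset.univ.erase i)
          (Finset.mem_erase.mpr ⟨hne.symm, Finset.mem_univ j⟩) _ _).symm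
      have hRR : ((Finset.univ.erase i).erase j).noncommProd
            (fun b => jucysMurphy n b ^ m' b) (Hcomm _ m')
          = ((Finset.univ.erase i).erase j).noncommProd
            (fun b => jucysMurphy n b ^ m b) (Hcomm _ m) := by
        refine Finset.noncommProd_congr rfl ?_ _
        intro x hx
        simp only [Finset.mem_erase] at hx
        rw [hm'app, hτ, Equiv.swap_apply_of_ne_of_ne hx.2.1 hx.1]
      rw [split m, split m', hRR, hm'i, hm'j]
      have hcR : Commute (of' (Equiv.swap i j))
          (((Finset.univ.erase i).erase j).noncommProd
            (fun b => jucysMurphy n b ^ m b) (Hcomm _ m)) := by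
        refine Finset.noncommProd_commute _ _ _ _ fun x hx => ?_
        simp only [Finset.mem_erase] at hx
        exact (hub x hx.2.1 hx.1).pow_right _
      have assemble : jucysMurphy n i ^ m i * (jucysMurphy n j ^ m j *
            ((Finset.univ.erase i).erase j).noncommProd
              (fun b => jucysMurphy n b ^ m b) (Hcomm _ m))
            + jucysMurphy n i ^ m j * (jucysMurphy n j ^ m i *
            ((Finset.univ.erase i).erase j).noncommProd
              (fun b => jucysMurphy n b ^ m b) (Hcomm _ m))
          = (jucysMurphy n i ^ m i * jucysMurphy n j ^ m j
            + jucysMurphy n i ^ m j * jucysMurphy n j ^ m i) *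
            ((Finset.univ.erase i).erase j).noncommProd
              (fun b => jucysMurphy n b ^ m b) (Hcomm _ m) := by
        rw [add_mul, mul_assoc, mul_assoc]
      rw [assemble]
      exact (aux_sym hPQ h1 h2 (m i) (m j)).mul_right hcR
  have hhalf : MvPolynomial.rename (⇑τ) ((2⁻¹ : ℂ) • f) = (2⁻¹ : ℂ) • f := by
    rw [MvPolynomial.smul_eq_C_mul, map_mul, MvPolynomial.rename_C, hf τ,
      ← MvPolynomial.smul_eq_C_mul]
  have hsplit : f = (2⁻¹ : ℂ) • f + MvPolynomial.rename (⇑τ) ((2⁻¹ : ℂ) • f) := by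
    rw [hhalf, ← add_smul]
    norm_num
  rw [hsplit]
  exact main _


lemma commute_of_all (z : MonoidAlgebra ℂ (Equiv.Perm (Fin n)))
    (hz : ∀ i j : Fin n, (j : ℕ) = (i : ℕ) + 1 → Commute (of' (Equiv.swap i j)) z)
    (σ : Equiv.Perm (Fin n)) : Commute (of' σ) z := by
  have hswap : ∀ (d : ℕ) (x y : Fin n), (y : ℕ) = (x : ℕ) + d + 1 →
      Commute (of' (Equiv.swap x y)) z := by
    intro d
    induction d with
    | zero => intro x y h; exact hz x y (by omega)
    | succ d ih =>
      intro x y h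
      have hyn : (y : ℕ) < n := y.isLt
      have hwlt : (x : ℕ) + d + 1 < n := by omega
      set w : Fin n := ⟨(x : ℕ) + d + 1, hwlt⟩ with hw
      have hwv : (w : ℕ) = (x : ℕ) + d + 1 := rfl
      have hxw : Commute (of' (Equiv.swap x w)) z := ih x w hwv
      have hwy : Commute (of' (Equiv.swap w y)) z := hz w y (by omega)
      have hxwne : x ≠ w := Fin.ne_of_val_ne (by omega)
      have hxy : x ≠ y := Fin.ne_of_val_ne (by omega)
      have hkey : Equiv.swap x y = Equiv.swap w y * Equiv.swap x w * Equiv.swap w y := by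
        have hh := Equiv.swap_apply_apply (Equiv.swap w y) x w
        rw [Equiv.swap_apply_of_ne_of_ne hxwne hxy, Equiv.swap_apply_left] at hh
        rw [hh, Equiv.swap_inv]
      rw [hkey, map_mul, map_mul]
      exact (hwy.mul_left hxw).mul_left hwy
  have hall : ∀ g : Equiv.Perm (Fin n), g.IsSwap → Commute (of' g) z := by
    rintro g ⟨x, y, hxy, rfl⟩
    rcases lt_or_gt_of_ne hxy with h | h
    · rw [Fin.lt_def] at h
      exact hswap ((y : ℕ) - (x : ℕ) - 1) x y (by omega)
    · have h' : (y : ℕ) < (x : ℕ) := h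
      rw [Equiv.swap_comm]
      exact hswap ((x : ℕ) - (y : ℕ) - 1) y x (by omega)
  let H : Subgroup (Equiv.Perm (Fin n)) :=
    { carrier := {g | Commute (of' g) z}
      one_mem' := by
        simp only [Set.mem_setOf_eq, map_one]
        exact Commute.one_left z
      mul_mem' := by
        intro a b ha hb
        simp only [Set.mem_setOf_eq, map_mul] at *
        exact ha.mul_left hb
      inv_mem' := by
        intro g hg
        simp only [Set.mem_setOf_eq] at *
        rw [← MonoidHom.coe_toHomUnits] at hg
        have h2 := hg.units_inv_left
        rwa [← map_inv, MonoidHom.coe_toHomUnits] at h2 }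
  have hle : Subgroup.closure {g : Equiv.Perm (Fin n) | g.IsSwap} ≤ H :=
    (Subgroup.closure_le H).mpr fun g hg => hall g hg
  exact hle ((Equiv.Perm.closure_isSwap (α := Fin n)) ▸ Subgroup.mem_top σ)

end JMAux

/-- Any symmetric polynomial of the Jucys–Murphy elements lies in the center of `ℂ[S_n]`. -/
theorem jmEval_symmetric_mem_center (n : ℕ) (hn : 1 ≤ n) (f : MvPolynomial (Fin n) ℂ)
    (hf : f.IsSymmetric) :
    jmEval n f ∈ Subalgebra.center ℂ (MonoidAlgebra ℂ (Equiv.Perm (Fin n))) := by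
  rw [Subalgebra.mem_center_iff]
  intro x
  have hz : ∀ σ : Equiv.Perm (Fin n),
      Commute (MonoidAlgebra.of ℂ (Equiv.Perm (Fin n)) σ) (jmEval n f) :=
    JMAux.commute_of_all _ (fun i j hij => JMAux.adjacent_commute_jmEval i j hij f hf)
  induction x using MonoidAlgebra.induction_on with
  | of g => exact (hz g).eq
  | add a b ha hb => rw [add_mul, mul_add, ha, hb]
  | smul r a ha => rw [smul_mul_assoc, mul_smul_comm, ha]
end

section
/- Let n ≥ 1 and let λ = (λ_1 ≥ … ≥ λ_ℓ) be a partition of d. Then in ℂ[S_n] the sum, over all sequences (τ_1,…,τ_d) of transpositions of S_n whose signature equals λ, of the products τ_1 τ_2 ⋯ τ_d equals (d! / (λ_1! ⋯ λ_ℓ!)) · m_λ(J_1,…,J_n), where m_λ is the monomial symmetric polynomial in n variables evaluated at the Jucys–Murphy elements. -/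
/-- The signature of a sequence of transpositions `(a_m b_m)`, `a_m < b_m`, encoded by the
function `b : Fin d → Fin n` of second (larger) elements: the multiset of nonzero
multiplicities with which each value of `Fin n` occurs among `b_1,…,b_d`.  It is a
partition of `d` (as a multiset of parts). -/
def signatureOf {n d : ℕ} (b : Fin d → Fin n) : Multiset ℕ :=
  (Finset.univ.val.map fun v : Fin n =>
    (Finset.univ.filter fun m : Fin d => b m = v).card).filter (fun c => c ≠ 0)

/-! ### Auxiliary lemmas -/

section Aux

lemma braid1 {α} [DecidableEq α] {a b c : α} (hab : a ≠ b) (hac : a ≠ c) (hbc : b ≠ c) :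
    Equiv.swap a b * Equiv.swap a c = Equiv.swap b c * Equiv.swap a b := by
  ext x
  by_cases h1 : x = a <;> by_cases h2 : x = b <;> by_cases h3 : x = c <;>
    simp_all [Equiv.swap_apply_def] <;> split_ifs <;> simp_all

lemma braid2 {α} [DecidableEq α] {a b c : α} (hab : a ≠ b) (hac : a ≠ c) (hbc : b ≠ c) :
    Equiv.swap a b * Equiv.swap b c = Equiv.swap a c * Equiv.swap a b := by
  ext x
  by_cases h1 : x = a <;> by_cases h2 : x = b <;> by_cases h3 : x = c <;>
    simp_all [Equiv.swap_apply_def, eq_comm]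

lemma swap_disj_comm {α} [DecidableEq α] {a b c d : α} (h1 : a ≠ c) (h2 : a ≠ d) (h3 : b ≠ c)
    (h4 : b ≠ d) : Equiv.swap a b * Equiv.swap c d = Equiv.swap c d * Equiv.swap a b := by
  ext x
  by_cases e1 : x = a <;> by_cases e2 : x = b <;> by_cases e3 : x = c <;> by_cases e4 : x = d <;>
    simp_all [Equiv.swap_apply_def] <;> split_ifs <;> simp_all

lemma jm_comm_lt {n : ℕ} {b c : Fin n} (hbc : b < c) :
    jucysMurphy n b * jucysMurphy n c = jucysMurphy n c * jucysMurphy n b := by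
  classical
  unfold jucysMurphy
  rw [Finset.sum_mul_sum, Finset.sum_mul_sum]
  simp only [← map_mul]
  rw [← Finset.sum_product', ← Finset.sum_product']
  refine Finset.sum_nbij' (fun x => (if x.2 = x.1 then b else if x.2 = b then x.1 else x.2, x.1))
    (fun y => (y.2, if y.1 = y.2 then b else if y.1 = b then y.2 else y.1)) ?_ ?_ ?_ ?_ ?_
  · rintro ⟨a, a'⟩ hx
    simp only [Finset.mem_product, Finset.mem_filter, Finset.mem_univ, true_and] at hx ⊢
    obtain ⟨ha, ha'⟩ := hx
    refine ⟨?_, ha⟩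
    split_ifs with h1 h2
    · exact hbc
    · exact ha.trans hbc
    · exact ha'
  · rintro ⟨a', a⟩ hy
    simp only [Finset.mem_product, Finset.mem_filter, Finset.mem_univ, true_and] at hy ⊢
    obtain ⟨ha', ha⟩ := hy
    refine ⟨ha, ?_⟩
    split_ifs with h1 h2
    · exact hbc
    · exact ha.trans hbc
    · exact ha'
  · rintro ⟨a, a'⟩ hx
    simp only [Finset.mem_product, Finset.mem_filter, Finset.mem_univ, true_and] at hx
    obtain ⟨ha, ha'⟩ := hx
    have hab : a ≠ b := ne_of_lt ha
    by_cases h1 : a' = a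
    · simp [h1, hab]
    · by_cases h2 : a' = b <;> simp [h1, h2, hab]
  · rintro ⟨a', a⟩ hy
    simp only [Finset.mem_product, Finset.mem_filter, Finset.mem_univ, true_and] at hy
    obtain ⟨ha', ha⟩ := hy
    have hab : a ≠ b := ne_of_lt ha
    by_cases h1 : a' = a
    · simp [h1, hab]
    · by_cases h2 : a' = b <;> simp [h1, h2, hab]
  · rintro ⟨a, a'⟩ hx
    simp only [Finset.mem_product, Finset.mem_filter, Finset.mem_univ, true_and] at hx
    obtain ⟨ha, ha'⟩ := hx
    have hab : a ≠ b := ne_of_lt ha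
    have hac : a ≠ c := ne_of_lt (ha.trans hbc)
    have hbc' : b ≠ c := ne_of_lt hbc
    congr 1
    by_cases h1 : a' = a
    · subst h1; simp only [if_pos rfl]
      exact braid1 hab hac hbc'
    · by_cases h2 : a' = b
      · subst h2; simp only [if_neg h1, if_pos rfl]
        exact braid2 hab hac hbc'
      · simp only [if_neg h1, if_neg h2]
        have ha'c : a' ≠ c := ne_of_lt ha'
        exact swap_disj_comm (Ne.symm h1) hac (Ne.symm h2) hbc'

lemma jm_commute (n : ℕ) (v w : Fin n) :
    Commute (jucysMurphy n v) (jucysMurphy n w) := by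
  rcases lt_trichotomy v w with h | h | h
  · exact jm_comm_lt h
  · rw [h]
  · exact (jm_comm_lt h).symm

lemma sum_piFinset_listProd {R : Type*} [NonAssocSemiring R] {κ : Type*} [DecidableEq κ]
    [Fintype κ] : ∀ {d : ℕ} (T : Fin d → Finset κ) (F : Fin d → κ → R),
    ∑ a ∈ Fintype.piFinset T, (List.ofFn fun m => F m (a m)).prod
      = (List.ofFn fun m => ∑ x ∈ T m, F m x).prod := by
  intro d
  induction d with
  | zero => intro T F; simp
  | succ d ih =>
    intro T F
    rw [Finset.sum_nbij' (i := fun a => (a 0, fun m : Fin d => a m.succ))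
      (j := fun y : κ × (Fin d → κ) => Fin.cons y.1 y.2)
      (s := Fintype.piFinset T) (t := (T 0) ×ˢ Fintype.piFinset (fun m : Fin d => T m.succ))
      (g := fun y => F 0 y.1 * (List.ofFn fun m : Fin d => F m.succ (y.2 m)).prod)]
    · rw [Finset.sum_product, List.ofFn_succ, List.prod_cons]
      rw [← ih (fun m => T m.succ) (fun m x => F m.succ x), Finset.sum_mul]
      exact Finset.sum_congr rfl fun x _ => by rw [Finset.mul_sum]
    · intro a ha
      simp only [Fintype.mem_piFinset] at ha
      simp [Finset.mem_product, Fintype.mem_piFinset, ha]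
    · intro y hy
      simp only [Finset.mem_product, Fintype.mem_piFinset] at hy
      simp only [Fintype.mem_piFinset]
      intro m
      cases m using Fin.cases with
      | zero => simpa using hy.1
      | succ i => simpa using hy.2 i
    · intro a _; exact Fin.cons_self_tail a
    · intro y _; simp
    · intro a _
      rw [List.ofFn_succ, List.prod_cons]

lemma coe_ofFn_eq {κ : Type*} {d : ℕ} (b : Fin d → κ) :
    (↑(List.ofFn b) : Multiset κ) = Multiset.map b Finset.univ.val := by
  rw [List.ofFn_eq_map]; rfl

lemma pairwise_total {α : Type*} {R : α → α → Prop} (h : ∀ a b, R a b) :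
    ∀ l : List α, l.Pairwise R := by
  intro l; induction l with
  | nil => exact List.Pairwise.nil
  | cons a l ih => exact List.Pairwise.cons (fun b _ => h a b) ih

lemma listProd_reorder {M : Type*} [Monoid M] {n d : ℕ} (g : Fin n → M)
    (hg : ∀ v w, Commute (g v) (g w)) (b : Fin d → Fin n) :
    (List.ofFn fun m => g (b m)).prod
      = (List.ofFn fun v : Fin n => g v ^ (Multiset.map b Finset.univ.val).count v).prod := by
  classical
  set cnt : Fin n → ℕ := fun v => (Multiset.map b Finset.univ.val).count v with hcnt
  have h1 : (List.ofFn fun m => g (b m)) = (List.ofFn b).map g := by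
    rw [List.map_ofFn]; rfl
  have hfun : (fun v : Fin n => g v ^ cnt v)
      = (List.prod ∘ List.map g ∘ fun v : Fin n => List.replicate (cnt v) v) := by
    funext v
    simp [Function.comp, List.prod_replicate]
  have hL : (List.ofFn fun v : Fin n => g v ^ cnt v).prod
      = (((List.ofFn fun v : Fin n => List.replicate (cnt v) v).flatten).map g).prod := by
    rw [List.map_flatten, List.map_ofFn, List.prod_flatten, List.map_ofFn, hfun]
  rw [h1, hL]
  have hperm : List.Perm (List.ofFn b)
      (List.ofFn fun v : Fin n => List.replicate (cnt v) v).flatten := by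
    rw [List.perm_iff_count]
    intro v
    have hl : (List.ofFn b).count v = cnt v := by
      rw [hcnt, ← coe_ofFn_eq]; exact (Multiset.coe_count _ _).symm
    rw [hl, List.count_flatten, List.map_ofFn]
    have h2 : (List.count v ∘ fun v : Fin n => List.replicate (cnt v) v)
        = fun w : Fin n => if w = v then cnt v else 0 := by
      funext w
      simp only [Function.comp_apply, List.count_replicate]
      split_ifs with h h' h' <;> simp_all
    rw [h2, List.sum_ofFn]
    simp
  exact (hperm.map g).prod_eq' (List.pairwise_map.2 (pairwise_total (fun x y => hg x y) _))

lemma multiset_X_prod {κ : Type*} [DecidableEq κ] {R : Type*} [CommSemiring R] (m : Multiset κ) :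
    (m.map (MvPolynomial.X : κ → MvPolynomial κ R)).prod
      = MvPolynomial.monomial (Multiset.toFinsupp m) 1 := by
  induction m using Multiset.induction with
  | empty => simp
  | cons a s ih =>
    rw [Multiset.map_cons, Multiset.prod_cons, ih, MvPolynomial.X,
      MvPolynomial.monomial_mul, one_mul]
    congr 1
    rw [← Multiset.singleton_add, map_add, Multiset.toFinsupp_singleton]

lemma card_fiber {n d : ℕ} (m : Multiset (Fin n)) (hm : Multiset.card m = d) :
    (Finset.univ.filter fun b : Fin d → Fin n => Multiset.map b Finset.univ.val = m).card
      = m.countPerms := by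
  classical
  open MvPolynomial in
  have h0 : ∏ _i : Fin d, (∑ v : Fin n, (X v : MvPolynomial (Fin n) ℕ))
      = (∑ v : Fin n, (X v : MvPolynomial (Fin n) ℕ)) ^ d := by
    rw [Finset.prod_const, Finset.card_univ, Fintype.card_fin]
  open MvPolynomial in
  have h1 : ((∑ v : Fin n, (X v : MvPolynomial (Fin n) ℕ)) ^ d)
      = ∑ b : Fin d → Fin n,
          monomial (Multiset.toFinsupp (Multiset.map b Finset.univ.val)) 1 := by
    rw [← h0, Finset.prod_univ_sum, Fintype.piFinset_univ]
    refine Finset.sum_congr rfl fun b _ => ?_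
    have : ∏ i : Fin d, (X (b i) : MvPolynomial (Fin n) ℕ)
        = ((Multiset.map b Finset.univ.val).map X).prod := by
      rw [Multiset.map_map]; rfl
    rw [this, multiset_X_prod]
  open MvPolynomial in
  have h2 : ((∑ v : Fin n, (X v : MvPolynomial (Fin n) ℕ)) ^ d)
      = ∑ k ∈ Finset.univ.sym d,
          monomial (Multiset.toFinsupp (k : Sym (Fin n) d).val)
            (Multiset.countPerms (k : Sym (Fin n) d).val) := by
    rw [Finset.sum_pow]
    refine Finset.sum_congr rfl fun k _ => ?_
    rw [multiset_X_prod]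
    rw [← MvPolynomial.C_eq_coe_nat, MvPolynomial.C_mul_monomial, mul_one, Nat.cast_id]
  have h3 := congrArg (MvPolynomial.coeff (Multiset.toFinsupp m)) (h1.symm.trans h2)
  rw [MvPolynomial.coeff_sum, MvPolynomial.coeff_sum] at h3
  simp only [MvPolynomial.coeff_monomial] at h3
  have hL : ∑ b : Fin d → Fin n,
      (if Multiset.toFinsupp (Multiset.map b Finset.univ.val) = Multiset.toFinsupp m
        then (1:ℕ) else 0)
      = (Finset.univ.filter fun b : Fin d → Fin n => Multiset.map b Finset.univ.val = m).card := by
    rw [Finset.card_filter]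
    refine Finset.sum_congr rfl fun b _ => ?_
    congr 1
    simp [EmbeddingLike.apply_eq_iff_eq]
  have hR : ∑ k ∈ Finset.univ.sym d,
      (if Multiset.toFinsupp (k : Sym (Fin n) d).val = Multiset.toFinsupp m
        then Multiset.countPerms (k : Sym (Fin n) d).val else 0) = m.countPerms := by
    rw [Finset.sum_congr rfl (g := fun k : Sym (Fin n) d =>
        if k = (Sym.mk m hm : Sym (Fin n) d) then Multiset.countPerms k.val else 0)
      (fun k _ => by
        congr 1
        simp only [EmbeddingLike.apply_eq_iff_eq]
        exact propext (Sym.coe_inj (s₁ := k) (s₂ := Sym.mk m hm)))]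
    rw [Finset.sum_ite_eq' (Finset.univ.sym d)]
    rw [if_pos (by simp [Finset.mem_sym_iff])]
  rw [← hL, ← hR]
  exact h3

lemma count_S {n d : ℕ} (b : Fin d → Fin n) (v : Fin n) :
    (Multiset.map b Finset.univ.val).count v
      = (Finset.univ.filter fun m : Fin d => b m = v).card := by
  rw [Multiset.count_map]
  have : (Finset.univ.filter fun m : Fin d => b m = v).card
      = Multiset.card (Multiset.filter (fun m : Fin d => b m = v) Finset.univ.val) := rfl
  rw [this]
  congr 1
  exact Multiset.filter_congr (fun x _ => by constructor <;> exact fun h => h.symm)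

lemma card_S {n d : ℕ} (b : Fin d → Fin n) :
    Multiset.card (Multiset.map b Finset.univ.val) = d := by
  rw [Multiset.card_map]
  exact Finset.card_univ.trans (Fintype.card_fin d)

lemma sig_eq {n d : ℕ} (b : Fin d → Fin n) :
    signatureOf b = (Nat.Partition.ofSym (⟨Multiset.map b Finset.univ.val, card_S b⟩ :
      Sym (Fin n) d)).parts := by
  classical
  set S := Multiset.map b Finset.univ.val with hS
  have h1 : (Nat.Partition.ofSym (⟨S, card_S b⟩ : Sym (Fin n) d)).parts
      = S.dedup.map S.count := rfl
  rw [h1]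
  unfold signatureOf
  have h2 : (fun v : Fin n => (Finset.univ.filter fun m : Fin d => b m = v).card)
      = fun v => S.count v := by
    funext v; rw [count_S]
  rw [h2]
  have h3 : Multiset.filter (fun c => c ≠ 0) (Finset.univ.val.map fun v => S.count v)
      = (Finset.univ.val.filter fun v : Fin n => S.count v ≠ 0).map (fun v => S.count v) := by
    rw [Multiset.filter_map]; rfl
  rw [h3]
  congr 1
  rw [Multiset.Nodup.ext (Multiset.Nodup.filter _ Finset.univ.nodup) (Multiset.nodup_dedup S)]
  intro v
  simp [Multiset.count_ne_zero, Multiset.mem_dedup]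

lemma exists_fn {κ : Type*} {d : ℕ} (m : Multiset κ) (hm : Multiset.card m = d) :
    ∃ b : Fin d → κ, Multiset.map b Finset.univ.val = m := by
  induction m using Quotient.inductionOn with
  | h l =>
    have hl : l.length = d := hm
    subst hl
    exact ⟨l.get, by rw [← coe_ofFn_eq]; exact congrArg _ (List.ofFn_get l)⟩

lemma mult_spec {κ : Type*} [DecidableEq κ] (m : Multiset κ) :
    ((m.dedup.map fun v => m.count v).map Nat.factorial).prod * m.countPerms
      = (Multiset.card m).factorial := by
  classical
  have h1 : m.countPerms = Nat.multinomial m.toFinset (fun v => m.count v) := by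
    rw [Multiset.countPerms, Finsupp.multinomial_eq, Multiset.toFinsupp_support]
    exact congrArg (Nat.multinomial m.toFinset) (funext fun v => Multiset.toFinsupp_apply m v)
  have h2 : ((m.dedup.map fun v => m.count v).map Nat.factorial).prod
      = ∏ v ∈ m.toFinset, (m.count v).factorial := by
    rw [Finset.prod, Multiset.toFinset_val, Multiset.map_map]
    rfl
  have h3 : ∑ v ∈ m.toFinset, m.count v = Multiset.card m :=
    Multiset.toFinset_sum_count_eq m
  rw [h1, h2, ← h3]
  exact Nat.multinomial_spec _ _

lemma jmEval_finsupp_sum (n : ℕ) (f : MvPolynomial (Fin n) ℂ) :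
    jmEval n f = Finsupp.sum (AddMonoidAlgebra.coeff f) (fun m c =>
      c • (List.ofFn fun b : Fin n => jucysMurphy n b ^ m b).prod) := rfl

lemma jmEval_add (n : ℕ) (f g : MvPolynomial (Fin n) ℂ) :
    jmEval n (f + g) = jmEval n f + jmEval n g := by
  rw [jmEval_finsupp_sum, jmEval_finsupp_sum, jmEval_finsupp_sum, AddMonoidAlgebra.coeff_add]
  exact Finsupp.sum_add_index' (fun m => zero_smul ℂ _) (fun m c1 c2 => add_smul c1 c2 _)

lemma jmEval_zero (n : ℕ) : jmEval n 0 = 0 := by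
  rw [jmEval_finsupp_sum]
  exact Finsupp.sum_zero_index

lemma jmEval_sum (n : ℕ) {ι : Type*} (t : Finset ι) (g : ι → MvPolynomial (Fin n) ℂ) :
    jmEval n (∑ i ∈ t, g i) = ∑ i ∈ t, jmEval n (g i) := by
  classical
  induction t using Finset.cons_induction with
  | empty => simp [jmEval_zero]
  | cons a s ha ih =>
    rw [Finset.sum_cons, Finset.sum_cons, jmEval_add, ih]

lemma jmEval_monomial (n : ℕ) (μ : Fin n →₀ ℕ) :
    jmEval n (MvPolynomial.monomial μ (1 : ℂ))
      = (List.ofFn fun v : Fin n => jucysMurphy n v ^ μ v).prod := by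
  unfold jmEval
  rw [MvPolynomial.support_monomial, if_neg one_ne_zero, Finset.sum_singleton,
    MvPolynomial.coeff_monomial, if_pos rfl, one_smul]

end Aux

/-- The sum, over all `d`-step sequences of transpositions of `S_n` with signature `λ`,
of the ordered products `τ_1 ⋯ τ_d ∈ ℂ[S_n]`, equals `(d! / (λ_1! ⋯ λ_ℓ!)) · m_λ(J_1,…,J_n)`,
with `m_λ` the monomial symmetric polynomial. -/
theorem sum_transposition_paths_eq_msymm_jucysMurphy (n : ℕ) (hn : 1 ≤ n) (d : ℕ)
    (lam : Nat.Partition d) :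
    ∑ p ∈ Finset.univ.filter
        (fun p : (Fin d → Fin n) × (Fin d → Fin n) =>
          (∀ m, p.1 m < p.2 m) ∧ signatureOf p.2 = lam.parts),
      MonoidAlgebra.of ℂ (Equiv.Perm (Fin n))
        (List.ofFn fun m : Fin d => Equiv.swap (p.1 m) (p.2 m)).prod
    = ((d.factorial : ℂ) / ((lam.parts.map Nat.factorial).prod : ℂ)) •
        jmEval n (MvPolynomial.msymm (Fin n) ℂ lam) := by
  classical
  set J := jucysMurphy n with hJ
  set B : Finset (Fin d → Fin n) :=
    Finset.univ.filter (fun b : Fin d → Fin n => signatureOf b = lam.parts) with hB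
  -- Step 1: split the sum over pairs
  have step1 : ∑ p ∈ Finset.univ.filter
        (fun p : (Fin d → Fin n) × (Fin d → Fin n) =>
          (∀ m, p.1 m < p.2 m) ∧ signatureOf p.2 = lam.parts),
      MonoidAlgebra.of ℂ (Equiv.Perm (Fin n))
        (List.ofFn fun m : Fin d => Equiv.swap (p.1 m) (p.2 m)).prod
      = ∑ b ∈ B, ∑ a ∈ Fintype.piFinset (fun m : Fin d =>
          Finset.univ.filter (fun x : Fin n => x < b m)),
          MonoidAlgebra.of ℂ (Equiv.Perm (Fin n))
            (List.ofFn fun m : Fin d => Equiv.swap (a m) (b m)).prod := by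
    refine Finset.sum_finset_product_right _ B
      (fun b => Fintype.piFinset fun m : Fin d =>
        Finset.univ.filter (fun x : Fin n => x < b m)) ?_
    intro p
    simp only [Finset.mem_filter, Finset.mem_univ, true_and, hB, Fintype.mem_piFinset]
    tauto
  -- Step 2: inner sum gives products of Jucys–Murphy elements
  have step2 : ∀ b : Fin d → Fin n,
      ∑ a ∈ Fintype.piFinset (fun m : Fin d =>
          Finset.univ.filter (fun x : Fin n => x < b m)),
        MonoidAlgebra.of ℂ (Equiv.Perm (Fin n))
          (List.ofFn fun m : Fin d => Equiv.swap (a m) (b m)).prod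
      = (List.ofFn fun m : Fin d => J (b m)).prod := by
    intro b
    have h1 : ∀ a : Fin d → Fin n,
        MonoidAlgebra.of ℂ (Equiv.Perm (Fin n))
          (List.ofFn fun m : Fin d => Equiv.swap (a m) (b m)).prod
        = (List.ofFn fun m : Fin d =>
            MonoidAlgebra.of ℂ (Equiv.Perm (Fin n)) (Equiv.swap (a m) (b m))).prod := by
      intro a
      rw [map_list_prod, List.map_ofFn]
      rfl
    rw [Finset.sum_congr rfl fun a _ => h1 a,
      sum_piFinset_listProd (fun m : Fin d => Finset.univ.filter (fun x : Fin n => x < b m))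
        (fun m x => MonoidAlgebra.of ℂ (Equiv.Perm (Fin n)) (Equiv.swap x (b m)))]
    rfl
  -- Step 3: reorder into products of powers
  have step3 : ∀ b : Fin d → Fin n,
      (List.ofFn fun m : Fin d => J (b m)).prod
      = (List.ofFn fun v : Fin n =>
          J v ^ (Multiset.map b Finset.univ.val).count v).prod :=
    listProd_reorder J (jm_commute n) 
  rw [step1, Finset.sum_congr rfl fun b _ => (step2 b).trans (step3 b)]
  -- Step 4: group by the associated multiset
  set Q : Finset (Sym (Fin n) d) :=
    Finset.univ.filter (fun s : Sym (Fin n) d => Nat.Partition.ofSym s = lam) with hQ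
  set g : (Fin d → Fin n) → Sym (Fin n) d := fun b => ⟨Multiset.map b Finset.univ.val, card_S b⟩
    with hg
  set f : Sym (Fin n) d → MonoidAlgebra ℂ (Equiv.Perm (Fin n)) :=
    fun s => (List.ofFn fun v : Fin n => J v ^ (s : Multiset (Fin n)).count v).prod with hf
  have step4 : ∑ b ∈ B, (List.ofFn fun v : Fin n =>
        J v ^ (Multiset.map b Finset.univ.val).count v).prod
      = ∑ s ∈ B.image g, (B.filter fun b => g b = s).card • f s := by
    rw [← Finset.sum_comp f g]
    rfl
  have himage : B.image g = Q := by
    ext s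
    simp only [Finset.mem_image, hQ, Finset.mem_filter, Finset.mem_univ, true_and]
    constructor
    · rintro ⟨b, hb, rfl⟩
      rw [hB, Finset.mem_filter] at hb
      apply Nat.Partition.ext
      rw [← sig_eq b]
      exact hb.2
    · intro hs
      obtain ⟨b, hb⟩ := exists_fn (s : Multiset (Fin n)) s.2
      have hgb : g b = s := Sym.coe_inj.mp hb
      refine ⟨b, ?_, hgb⟩
      rw [hB, Finset.mem_filter]
      refine ⟨Finset.mem_univ b, ?_⟩
      rw [sig_eq b]
      show (Nat.Partition.ofSym (g b)).parts = lam.parts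
      rw [hgb, hs]
  have hfiber : ∀ s ∈ Q, (B.filter fun b => g b = s).card
      = Multiset.countPerms (s : Multiset (Fin n)) := by
    intro s hs
    rw [hQ, Finset.mem_filter] at hs
    have : B.filter (fun b => g b = s)
        = Finset.univ.filter (fun b : Fin d → Fin n =>
            Multiset.map b Finset.univ.val = (s : Multiset (Fin n))) := by
      ext b
      simp only [Finset.mem_filter, Finset.mem_univ, true_and, hB]
      constructor
      · intro hb
        exact Sym.coe_inj.mpr hb.2
      · intro hb
        have hgb : g b = s := Sym.coe_inj.mp hb
        refine ⟨?_, hgb⟩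
        rw [sig_eq b]
        show (Nat.Partition.ofSym (g b)).parts = lam.parts
        rw [hgb, hs.2]
    rw [this]
    exact card_fiber _ s.2
  -- Step 5: the right-hand side
  have step5 : jmEval n (MvPolynomial.msymm (Fin n) ℂ lam) = ∑ s ∈ Q, f s := by
    rw [MvPolynomial.msymm, jmEval_sum]
    have hsummand : ∀ s : {a : Sym (Fin n) d // Nat.Partition.ofSym a = lam},
        jmEval n ((Multiset.map MvPolynomial.X (s : Sym (Fin n) d).val).prod) = f s.1 := by
      intro s
      rw [multiset_X_prod, jmEval_monomial, hf]
      simp only [Multiset.toFinsupp_apply]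
      rfl
    rw [Finset.sum_congr rfl fun s _ => hsummand s]
    rw [hQ]
    exact (Finset.sum_subtype _ (by simp) f).symm
  rw [step4, himage, step5, Finset.smul_sum]
  -- Step 6: compare coefficients
  refine Finset.sum_congr rfl fun s hs => ?_
  rw [← Nat.cast_smul_eq_nsmul ℂ]
  congr 1
  rw [hfiber s hs]
  rw [hQ, Finset.mem_filter] at hs
  have hparts : lam.parts = ((s : Multiset (Fin n)).dedup.map
      (fun v => (s : Multiset (Fin n)).count v)) := by
    rw [← hs.2]; rfl
  have hspec := mult_spec (s : Multiset (Fin n))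
  rw [show Multiset.card (s : Multiset (Fin n)) = d from s.2] at hspec
  rw [hparts]
  have hpos : 0 < (((s : Multiset (Fin n)).dedup.map
      (fun v => (s : Multiset (Fin n)).count v)).map Nat.factorial).prod := by
    refine Multiset.prod_pos fun x hx => ?_
    obtain ⟨y, _, rfl⟩ := Multiset.mem_map.mp hx
    exact Nat.factorial_pos y
  have hne : (((((s : Multiset (Fin n)).dedup.map
      (fun v => (s : Multiset (Fin n)).count v)).map Nat.factorial).prod : ℕ) : ℂ) ≠ 0 :=
    Nat.cast_ne_zero.mpr hpos.ne'
  rw [eq_div_iff hne]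
  have hspec' := (mul_comm _ _).trans hspec
  exact_mod_cast congrArg (Nat.cast : ℕ → ℂ) hspec'
end

section
/- Let n ≥ 1, let λ be a partition of d, let μ be a partition of n, and let g, g' ∈ S_n be two permutations of the same cycle type. Then the number of sequences (τ_1,…,τ_d) of transpositions of S_n with signature λ such that (τ_1 ⋯ τ_d)^{−1} g has cycle type μ equals the number of such sequences with (τ_1 ⋯ τ_d)^{−1} g' of cycle type μ; i.e., the weighted path count between conjugacy classes in the Cayley graph of S_n generated by transpositions depends only on the cycle types. -/
/-- The number of `d`-step sequences `(τ_1,…,τ_d)` of transpositions of `S_n` with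
signature `λ` such that `(τ_1 ⋯ τ_d)⁻¹ g` has cycle type `μ`. -/
noncomputable def pathCount (n d : ℕ) (lam : Nat.Partition d) (μ : Nat.Partition n)
    (g : Equiv.Perm (Fin n)) : ℕ :=
  (Finset.univ.filter
    (fun p : (Fin d → Fin n) × (Fin d → Fin n) =>
      (∀ m, p.1 m < p.2 m) ∧ signatureOf p.2 = lam.parts ∧
        (((List.ofFn fun m : Fin d => Equiv.swap (p.1 m) (p.2 m)).prod)⁻¹ *
            g).partition.parts = μ.parts)).card

section RingLemmas
variable {R : Type*} [Ring R]

private lemma newton_step (A B : R) (h : Commute A B) (k : ℕ) :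
    A ^ (k+2) + B ^ (k+2) = (A ^ (k+1) + B ^ (k+1)) * (A + B) - (A ^ k + B ^ k) * (A * B) := by
  have e1 : B ^ (k+1) * A = A * B ^ (k+1) := ((h.symm).pow_left (k+1)).eq
  have e2 : B ^ k * (A * B) = A * B ^ (k+1) := by
    rw [← mul_assoc, ((h.symm).pow_left k).eq, mul_assoc, ← pow_succ]
  have e3 : A ^ k * (A * B) = A ^ (k+1) * B := by rw [← mul_assoc, ← pow_succ]
  simp only [add_mul, mul_add, e1, e2, e3]
  rw [← pow_succ, ← pow_succ]
  abel

private lemma powsum_eq (A B A₁ B₁ : R) (hAB : Commute A B) (hc : Commute A₁ B₁)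
    (he1 : A₁ + B₁ = A + B) (he2 : A₁ * B₁ = A * B) :
    ∀ k, A₁ ^ k + B₁ ^ k = A ^ k + B ^ k := by
  have H : ∀ k, (A₁ ^ k + B₁ ^ k = A ^ k + B ^ k) ∧
      (A₁ ^ (k+1) + B₁ ^ (k+1) = A ^ (k+1) + B ^ (k+1)) := by
    intro k
    induction k with
    | zero => simp [he1]
    | succ k ih =>
      refine ⟨ih.2, ?_⟩
      rw [newton_step A B hAB k, newton_step A₁ B₁ hc k, ih.1, ih.2, he1, he2]
  exact fun k => (H k).1

private lemma symsum_aux (A B : R) (h : Commute A B) {p q : ℕ} (hqp : q ≤ p) :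
    A ^ p * B ^ q + A ^ q * B ^ p = (A * B) ^ q * (A ^ (p-q) + B ^ (p-q)) := by
  rw [h.mul_pow, mul_add]
  have h1 : A ^ q * B ^ q * A ^ (p-q) = A ^ p * B ^ q := by
    rw [mul_assoc, ((h.symm).pow_pow q (p-q)).eq, ← mul_assoc, ← pow_add,
      Nat.add_sub_cancel' hqp]
  have h2 : A ^ q * B ^ q * B ^ (p-q) = A ^ q * B ^ p := by
    rw [mul_assoc, ← pow_add, Nat.add_sub_cancel' hqp]
  rw [h1, h2]

private lemma symsum_eq (A B A₁ B₁ : R) (hAB : Commute A B) (hc : Commute A₁ B₁)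
    (he1 : A₁ + B₁ = A + B) (he2 : A₁ * B₁ = A * B) (p q : ℕ) :
    A₁ ^ p * B₁ ^ q + A₁ ^ q * B₁ ^ p = A ^ p * B ^ q + A ^ q * B ^ p := by
  rcases le_total q p with hqp | hpq
  · rw [symsum_aux A B hAB hqp, symsum_aux A₁ B₁ hc hqp, he2,
      powsum_eq A B A₁ B₁ hAB hc he1 he2]
  · rw [add_comm (A₁ ^ p * B₁ ^ q), add_comm (A ^ p * B ^ q),
      symsum_aux A B hAB hpq, symsum_aux A₁ B₁ hc hpq, he2,
      powsum_eq A B A₁ B₁ hAB hc he1 he2]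

private lemma prod_ofFn_sum {α : Type*} [DecidableEq α] :
    ∀ {d : ℕ} (t : Fin d → Finset α) (f : (m : Fin d) → α → R),
    (List.ofFn fun m => ∑ x ∈ t m, f m x).prod
      = ∑ a ∈ Fintype.piFinset t, (List.ofFn fun m => f m (a m)).prod := by
  intro d
  induction d with
  | zero =>
    intro t f
    simp
  | succ d ih =>
    intro t f
    rw [List.ofFn_succ, List.prod_cons, ih (fun m => t m.succ) (fun m x => f m.succ x),
      Finset.sum_mul_sum]
    have hsplit : Fintype.piFinset t
        = (t 0 ×ˢ Fintype.piFinset (Fin.tail t)).map (Fin.consEquiv _).toEmbedding := by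
      have := Finset.filter_piFinset_eq_map_consEquiv (S := t) (fun _ => True)
      simpa using this
    rw [hsplit, Finset.sum_map, Finset.sum_product]
    refine Finset.sum_congr rfl fun x hx => Finset.sum_congr rfl fun a ha => ?_
    rw [List.ofFn_succ]
    simp [Fin.consEquiv, List.prod_cons, Fin.tail]
end RingLemmas

open Equiv Finset MonoidAlgebra

noncomputable section
namespace PCAux
variable {R : Type*} [Ring R] {n d : ℕ}

/-! ### multiset products of commuting families -/

lemma mprod_pw (f : Fin n → R) (hf : ∀ u v, Commute (f u) (f v)) (M : Multiset (Fin n)) :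
    {x | x ∈ M.map f}.Pairwise Commute := by
    intro x hx y hy _
    obtain ⟨u, _, rfl⟩ := Multiset.mem_map.1 hx
    obtain ⟨v, _, rfl⟩ := Multiset.mem_map.1 hy
    exact hf u v

def mprod (f : Fin n → R) (hf : ∀ u v, Commute (f u) (f v)) (M : Multiset (Fin n)) : R :=
  (M.map f).noncommProd (mprod_pw f hf M)

lemma noncommProd_congr' (s t : Multiset R) (h : s = t) (c1 c2) :
    s.noncommProd c1 = t.noncommProd c2 := by subst h; rfl

lemma mprod_add (f : Fin n → R) (hf) (M K : Multiset (Fin n)) :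
    mprod f hf (M + K) = mprod f hf M * mprod f hf K := by
  have hcomm : {x | x ∈ Multiset.map f M + Multiset.map f K}.Pairwise Commute := by
    intro x hx y hy _
    simp only [Set.mem_setOf_eq, Multiset.mem_add, Multiset.mem_map] at hx hy
    obtain (⟨u,_,rfl⟩|⟨u,_,rfl⟩) := hx <;> obtain (⟨v,_,rfl⟩|⟨v,_,rfl⟩) := hy <;> exact hf _ _
  unfold mprod
  rw [noncommProd_congr' _ _ (Multiset.map_add f M K) _ hcomm, Multiset.noncommProd_add]

lemma mprod_replicate (f : Fin n → R) (hf) (k : ℕ) (v : Fin n) :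
    mprod f hf (Multiset.replicate k v) = f v ^ k := by
  unfold mprod
  rw [noncommProd_congr' _ _ (Multiset.map_replicate f k v) _
      (by have hp : {x | x ∈ Multiset.replicate k (f v)}.Pairwise Commute := by
            intro x hx y hy _
            rw [Multiset.eq_of_mem_replicate hx, Multiset.eq_of_mem_replicate hy]
          exact hp),
    Multiset.noncommProd_eq_pow_card _ _ (f v) (fun x hx => Multiset.eq_of_mem_replicate hx),
    Multiset.card_replicate]

lemma mprod_congr (f g : Fin n → R) (hf) (hg) (M : Multiset (Fin n))
    (h : ∀ v ∈ M, f v = g v) : mprod f hf M = mprod g hg M :=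
  noncommProd_congr' _ _ (Multiset.map_congr rfl h) _ _

lemma ofFn_prod_eq_mprod (f : Fin n → R) (hf) (b : Fin d → Fin n) :
    (List.ofFn fun m => f (b m)).prod = mprod f hf (Finset.univ.val.map b) := by
  unfold mprod
  rw [noncommProd_congr' _ ((List.ofFn fun m => f (b m)) : List R)
    (by
      rw [Fin.univ_def]
      show ((List.finRange d : Multiset (Fin d)).map b).map f = _
      rw [List.ofFn_eq_map]
      rw [Multiset.map_map]
      rfl) _
    (by
      have hp : {x | x ∈ ((List.ofFn fun m => f (b m) : List R) : Multiset R)}.Pairwise Commute := by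
        intro x hx y hy _
        simp only [Set.mem_setOf_eq, Multiset.mem_coe, List.mem_ofFn] at hx hy
        obtain ⟨u, rfl⟩ := hx
        obtain ⟨v, rfl⟩ := hy
        exact hf _ _
      exact hp),
    Multiset.noncommProd_coe]

/-! ### Jucys–Murphy elements -/

def X (n : ℕ) (v : Fin n) : MonoidAlgebra ℚ (Equiv.Perm (Fin n)) :=
  ∑ a ∈ univ.filter (· < v), single (swap a v) 1

lemma single_comm_X (c : Equiv.Perm (Fin n)) (v : Fin n) (hv : c v = v)
    (hst : ∀ a : Fin n, a < v → c a < v) (hst' : ∀ a : Fin n, a < v → c⁻¹ a < v) :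
    single c (1:ℚ) * X n v = X n v * single c 1 := by
  rw [X, Finset.mul_sum, Finset.sum_mul]
  refine Finset.sum_nbij' (fun a => c a) (fun a => c⁻¹ a) ?_ ?_ ?_ ?_ ?_
  · intro a ha
    simp only [mem_filter, mem_univ, true_and] at ha ⊢
    exact hst a ha
  · intro a ha
    simp only [mem_filter, mem_univ, true_and] at ha ⊢
    exact hst' a ha
  · intro a _; simp
  · intro a _; simp
  · intro a ha
    rw [single_mul_single, single_mul_single, one_mul]
    congr 1
    have := Equiv.swap_apply_apply c a v
    rw [hv] at this
    rw [this, mul_assoc, mul_assoc]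
    simp

lemma X_comm (u v : Fin n) : Commute (X n u) (X n v) := by
  have key : ∀ u v : Fin n, u < v → Commute (X n u) (X n v) := by
    intro u v huv
    show X n u * X n v = X n v * X n u
    have expand : X n u = ∑ a ∈ univ.filter (· < u), single (swap a u) 1 := rfl
    rw [expand, Finset.sum_mul, Finset.mul_sum]
    refine Finset.sum_congr rfl fun a ha => ?_
    simp only [mem_filter, mem_univ, true_and] at ha
    have hau : a ≠ v := ne_of_lt (ha.trans huv)
    have huv' : u ≠ v := ne_of_lt huv
    have h := single_comm_X (Equiv.swap a u) v
      (Equiv.swap_apply_of_ne_of_ne hau.symm huv'.symm)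
      (fun b hb => by
        rcases eq_or_ne b a with rfl | hba
        · rw [Equiv.swap_apply_left]; exact huv
        rcases eq_or_ne b u with rfl | hbu
        · rw [Equiv.swap_apply_right]; exact ha.trans huv
        · rw [Equiv.swap_apply_of_ne_of_ne hba hbu]; exact hb)
      (fun b hb => by
        rw [Equiv.swap_inv]
        rcases eq_or_ne b a with rfl | hba
        · rw [Equiv.swap_apply_left]; exact huv
        rcases eq_or_ne b u with rfl | hbu
        · rw [Equiv.swap_apply_right]; exact ha.trans huv
        · rw [Equiv.swap_apply_of_ne_of_ne hba hbu]; exact hb)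
    exact h
  rcases lt_trichotomy u v with h | rfl | h
  · exact key u v h
  · exact Commute.refl _
  · exact (key v u h).symm

variable {N : ℕ} (i : Fin N)

abbrev sN : Equiv.Perm (Fin (N+1)) := swap i.castSucc i.succ
abbrev SS : MonoidAlgebra ℚ (Equiv.Perm (Fin (N+1))) := single (sN i) 1

lemma ic_lt_j : i.castSucc < i.succ := i.castSucc_lt_succ

lemma SS_mul_SS : SS i * SS i = 1 := by
  rw [single_mul_single, mul_one, Equiv.swap_mul_self, MonoidAlgebra.one_def]

lemma filter_lt_succ :
    (univ.filter (· < (i.succ : Fin (N+1))))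
      = insert i.castSucc (univ.filter (· < i.castSucc)) := by
  ext a
  simp only [mem_filter, mem_univ, true_and, mem_insert]
  rw [Fin.lt_def, Fin.lt_def, Fin.val_succ, Fin.coe_castSucc, Fin.ext_iff, Fin.coe_castSucc]
  omega

lemma ic_not_mem : i.castSucc ∉ univ.filter (· < (i.castSucc : Fin (N+1))) := by simp

lemma s_fix_lo {a : Fin (N+1)} (ha : a < i.castSucc) : sN i a = a :=
  Equiv.swap_apply_of_ne_of_ne (ne_of_lt ha) (ne_of_lt (ha.trans (ic_lt_j i)))

lemma s_stab {v : Fin (N+1)} (h1 : v ≠ i.castSucc) (h2 : v ≠ i.succ) :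
    ∀ a : Fin (N+1), a < v → sN i a < v := by
  intro a ha
  rcases eq_or_ne a i.castSucc with rfl | hic
  · rw [Equiv.swap_apply_left]
    rw [Fin.lt_def] at ha ⊢
    have h2' : (v : ℕ) ≠ (i.succ : ℕ) := fun hh => h2 (Fin.ext hh)
    simp only [Fin.coe_castSucc, Fin.val_succ] at *
    omega
  rcases eq_or_ne a i.succ with rfl | hj
  · rw [Equiv.swap_apply_right]
    exact (ic_lt_j i).trans ha
  · rw [Equiv.swap_apply_of_ne_of_ne hic hj]; exact ha

lemma SS_comm_X {v : Fin (N+1)} (h1 : v ≠ i.castSucc) (h2 : v ≠ i.succ) :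
    SS i * X (N+1) v = X (N+1) v * SS i := by
  refine single_comm_X _ v (Equiv.swap_apply_of_ne_of_ne h1 h2) (s_stab i h1 h2) ?_
  rw [Equiv.swap_inv]
  exact s_stab i h1 h2

lemma conj_X_ic : SS i * X (N+1) i.castSucc * SS i = X (N+1) i.succ - SS i := by
  have expand : X (N+1) i.castSucc
      = ∑ a ∈ univ.filter (· < i.castSucc), single (swap a i.castSucc) (1:ℚ) := rfl
  rw [expand, Finset.mul_sum, Finset.sum_mul]
  have hterm : ∀ a ∈ univ.filter (· < (i.castSucc : Fin (N+1))),
      SS i * single (swap a i.castSucc) (1:ℚ) * SS i = single (swap a i.succ) 1 := by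
    intro a ha
    simp only [mem_filter, mem_univ, true_and] at ha
    rw [single_mul_single, single_mul_single, mul_one, one_mul]
    congr 1
    have h := Equiv.swap_apply_apply (sN i) a i.castSucc
    rw [Equiv.swap_inv] at h
    rw [s_fix_lo i ha, Equiv.swap_apply_left] at h
    exact h.symm
  rw [Finset.sum_congr rfl hterm]
  have hXj : X (N+1) i.succ
      = single (swap i.castSucc i.succ) (1:ℚ)
        + ∑ a ∈ univ.filter (· < i.castSucc), single (swap a i.succ) 1 := by
    have expand2 : X (N+1) i.succ
        = ∑ a ∈ univ.filter (· < (i.succ : Fin (N+1))), single (swap a i.succ) (1:ℚ) := rfl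
    rw [expand2, filter_lt_succ, Finset.sum_insert (ic_not_mem i)]
  rw [hXj]
  show _ = single (sN i) 1 + _ - single (sN i) 1
  abel

lemma conj_X_j : SS i * X (N+1) i.succ * SS i = X (N+1) i.castSucc + SS i := by
  have expand2 : X (N+1) i.succ
      = ∑ a ∈ univ.filter (· < (i.succ : Fin (N+1))), single (swap a i.succ) (1:ℚ) := rfl
  rw [expand2, filter_lt_succ, Finset.sum_insert (ic_not_mem i)]
  rw [mul_add, add_mul]
  have h1 : SS i * single (swap i.castSucc i.succ) (1:ℚ) * SS i = SS i := by
    rw [single_mul_single, mul_one]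
    show single (sN i * sN i) 1 * SS i = SS i
    rw [Equiv.swap_mul_self, single_mul_single, one_mul, one_mul]
  have h2 : SS i * (∑ a ∈ univ.filter (· < (i.castSucc : Fin (N+1))),
      single (swap a i.succ) (1:ℚ)) * SS i = X (N+1) i.castSucc := by
    rw [Finset.mul_sum, Finset.sum_mul]
    have expand : X (N+1) i.castSucc
        = ∑ a ∈ univ.filter (· < i.castSucc), single (swap a i.castSucc) (1:ℚ) := rfl
    rw [expand]
    refine Finset.sum_congr rfl fun a ha => ?_
    simp only [mem_filter, mem_univ, true_and] at ha
    rw [single_mul_single, single_mul_single, mul_one, one_mul]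
    congr 1
    have h := Equiv.swap_apply_apply (sN i) a i.succ
    rw [Equiv.swap_inv] at h
    rw [s_fix_lo i ha, Equiv.swap_apply_right] at h
    exact h.symm
  rw [h1, h2]
  exact add_comm _ _


section Main
variable {N d : ℕ} (i : Fin N)

/-! ### conjugation by an adjacent transposition -/

def phi (i : Fin N) (x : MonoidAlgebra ℚ (Equiv.Perm (Fin (N+1)))) :
    MonoidAlgebra ℚ (Equiv.Perm (Fin (N+1))) := SS i * x * SS i

lemma phi_mul (x y : MonoidAlgebra ℚ (Equiv.Perm (Fin (N+1)))) :
    phi i (x * y) = phi i x * phi i y := by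
  unfold phi
  simp only [mul_assoc]
  rw [← mul_assoc (SS i) (SS i) (y * SS i), SS_mul_SS, one_mul]

lemma phi_one : phi i 1 = 1 := by
  unfold phi; rw [mul_one, SS_mul_SS]

lemma phi_list_prod (l : List (MonoidAlgebra ℚ (Equiv.Perm (Fin (N+1))))) :
    phi i l.prod = (l.map (phi i)).prod := by
  induction l with
  | nil => simpa using phi_one i
  | cons a l ih => rw [List.prod_cons, phi_mul, ih, List.map_cons, List.prod_cons]

lemma phi_commute {x y : MonoidAlgebra ℚ (Equiv.Perm (Fin (N+1)))} (h : Commute x y) :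
    Commute (phi i x) (phi i y) := by
  show phi i x * phi i y = phi i y * phi i x
  rw [← phi_mul, ← phi_mul, h.eq]

def Xc (i : Fin N) (v : Fin (N+1)) : MonoidAlgebra ℚ (Equiv.Perm (Fin (N+1))) :=
  phi i (X (N+1) v)

lemma Xc_comm : ∀ u v, Commute (Xc i u) (Xc i v) := fun u v => phi_commute i (X_comm u v)

lemma Xc_off {v : Fin (N+1)} (h1 : v ≠ i.castSucc) (h2 : v ≠ i.succ) :
    Xc i v = X (N+1) v := by
  unfold Xc phi
  rw [SS_comm_X i h1 h2, mul_assoc, SS_mul_SS, mul_one]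

lemma Xc_ic : Xc i i.castSucc = X (N+1) i.succ - SS i := conj_X_ic i

lemma Xc_j : Xc i i.succ = X (N+1) i.castSucc + SS i := conj_X_j i

/-! ### splitting multiset products -/

lemma split_M (M : Multiset (Fin (N+1))) :
    M = (Multiset.replicate (M.count i.castSucc) i.castSucc
        + Multiset.replicate (M.count i.succ) i.succ)
        + M.filter (fun v => ¬(v = i.castSucc ∨ v = i.succ)) := by
  classical
  conv_lhs => rw [← Multiset.filter_add_not (fun v => v = i.castSucc ∨ v = i.succ) M]
  congr 1
  rw [← Multiset.filter_eq' M i.castSucc, ← Multiset.filter_eq' M i.succ,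
    Multiset.filter_add_filter]
  have h0 : Multiset.filter (fun a => a = i.castSucc ∧ a = i.succ) M = 0 :=
    Multiset.filter_eq_nil.2 (fun a _ hc =>
      absurd (hc.1 ▸ hc.2) i.castSucc_lt_succ.ne)
  rw [h0, add_zero]

lemma mprod_split (f : Fin (N+1) → MonoidAlgebra ℚ (Equiv.Perm (Fin (N+1)))) (hf)
    (M : Multiset (Fin (N+1))) :
    mprod f hf M = f i.castSucc ^ M.count i.castSucc * f i.succ ^ M.count i.succ
      * mprod f hf (M.filter (fun v => ¬(v = i.castSucc ∨ v = i.succ))) := by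
  conv_lhs => rw [split_M i M]
  rw [mprod_add, mprod_add, mprod_replicate, mprod_replicate]

lemma map_tau (b : Fin d → Fin (N+1)) :
    (Finset.univ.val.map (fun m => sN i (b m))) = (Finset.univ.val.map b).map (sN i) := by
  rw [Multiset.map_map]; rfl

lemma count_tau_ic (b : Fin d → Fin (N+1)) :
    (Finset.univ.val.map (fun m => sN i (b m))).count i.castSucc
      = (Finset.univ.val.map b).count i.succ := by
  rw [map_tau]
  have h := Multiset.count_map_eq_count' (⇑(sN i)) (Finset.univ.val.map b)
    (sN i).injective i.succ
  simpa [Equiv.swap_apply_right] using h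

lemma count_tau_j (b : Fin d → Fin (N+1)) :
    (Finset.univ.val.map (fun m => sN i (b m))).count i.succ
      = (Finset.univ.val.map b).count i.castSucc := by
  rw [map_tau]
  have h := Multiset.count_map_eq_count' (⇑(sN i)) (Finset.univ.val.map b)
    (sN i).injective i.castSucc
  simpa [Equiv.swap_apply_left] using h

lemma filter_tau (b : Fin d → Fin (N+1)) :
    ((Finset.univ.val.map fun m => sN i (b m)).filter
        (fun v => ¬(v = i.castSucc ∨ v = i.succ)))
      = (Finset.univ.val.map b).filter (fun v => ¬(v = i.castSucc ∨ v = i.succ)) := by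
  rw [map_tau, Multiset.filter_map]
  have h1 : ∀ a ∈ (Finset.univ.val.map b),
      ((fun v => ¬(v = i.castSucc ∨ v = i.succ)) ∘ ⇑(sN i)) a
        ↔ (fun v => ¬(v = i.castSucc ∨ v = i.succ)) a := by
    intro a _
    simp only [Function.comp_apply]
    have e1 : sN i a = i.castSucc ↔ a = i.succ := by
      conv_lhs => rw [show (i.castSucc : Fin (N+1)) = sN i i.succ from
        (Equiv.swap_apply_right _ _).symm]
      exact Equiv.apply_eq_iff_eq _
    have e2 : sN i a = i.succ ↔ a = i.castSucc := by
      conv_lhs => rw [show (i.succ : Fin (N+1)) = sN i i.castSucc from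
        (Equiv.swap_apply_left _ _).symm]
      exact Equiv.apply_eq_iff_eq _
    rw [e1, e2, or_comm]
  rw [Multiset.filter_congr h1]
  have h2 : ∀ v ∈ (Finset.univ.val.map b).filter
      (fun v => ¬(v = i.castSucc ∨ v = i.succ)), sN i v = id v := by
    intro v hv
    have hv2 := (Multiset.mem_filter.1 hv).2
    push_neg at hv2
    exact Equiv.swap_apply_of_ne_of_ne hv2.1 hv2.2
  rw [Multiset.map_congr rfl h2, Multiset.map_id]

/-! ### the key pairing identity -/

lemma pair_id (b : Fin d → Fin (N+1)) :
    (List.ofFn fun m => Xc i (b m)).prod + (List.ofFn fun m => Xc i (sN i (b m))).prod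
      = (List.ofFn fun m => X (N+1) (b m)).prod
        + (List.ofFn fun m => X (N+1) (sN i (b m))).prod := by
  rw [ofFn_prod_eq_mprod (Xc i) (Xc_comm i) b,
    ofFn_prod_eq_mprod (Xc i) (Xc_comm i) (fun m => sN i (b m)),
    ofFn_prod_eq_mprod (X (N+1)) X_comm b,
    ofFn_prod_eq_mprod (X (N+1)) X_comm (fun m => sN i (b m)),
    mprod_split i (Xc i) (Xc_comm i) (Finset.univ.val.map b),
    mprod_split i (Xc i) (Xc_comm i) (Finset.univ.val.map (fun m => sN i (b m))),
    mprod_split i (X (N+1)) X_comm (Finset.univ.val.map b),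
    mprod_split i (X (N+1)) X_comm (Finset.univ.val.map (fun m => sN i (b m))),
    count_tau_ic i b, count_tau_j i b, filter_tau i b]
  set M : Multiset (Fin (N+1)) := Finset.univ.val.map b with hM
  set p : ℕ := M.count i.castSucc with hp
  set q : ℕ := M.count i.succ with hq
  set M0 : Multiset (Fin (N+1)) := M.filter (fun v => ¬(v = i.castSucc ∨ v = i.succ)) with hM0
  have hR : mprod (Xc i) (Xc_comm i) M0 = mprod (X (N+1)) X_comm M0 := by
    refine mprod_congr _ _ _ _ _ (fun v hv => ?_)
    have hv2 := (Multiset.mem_filter.1 hv).2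
    push_neg at hv2
    exact Xc_off i hv2.1 hv2.2
  rw [hR, ← add_mul, ← add_mul]
  congr 1
  set A := X (N+1) i.castSucc with hA
  set B := X (N+1) i.succ with hB
  have hAB : Commute A B := X_comm _ _
  have hc : Commute (Xc i i.castSucc) (Xc i i.succ) := Xc_comm i _ _
  have he1 : Xc i i.castSucc + Xc i i.succ = A + B := by
    rw [Xc_ic, Xc_j]; abel
  have he2 : Xc i i.castSucc * Xc i i.succ = A * B := by
    rw [Xc_ic, Xc_j]
    have hSA : SS i * A = B * SS i - 1 := by
      have h := conj_X_ic i
      calc SS i * A = (SS i * A * SS i) * SS i := by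
            rw [mul_assoc (SS i * A), SS_mul_SS, mul_one]
        _ = (B - SS i) * SS i := by rw [h]
        _ = B * SS i - 1 := by rw [sub_mul, SS_mul_SS]
    have expand : (B - SS i) * (A + SS i)
        = (B * A + B * SS i) - (SS i * A + SS i * SS i) := by
      rw [sub_mul, mul_add, mul_add]
    rw [expand, hSA, SS_mul_SS, hAB.symm.eq]
    abel
  exact symsum_eq A B (Xc i i.castSucc) (Xc i i.succ) hAB hc he1 he2 p q

/-! ### the central element -/

def sw {n d : ℕ} (p : (Fin d → Fin n) × (Fin d → Fin n)) : Equiv.Perm (Fin n) :=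
  (List.ofFn fun m : Fin d => Equiv.swap (p.1 m) (p.2 m)).prod

def Pset (n d : ℕ) (lam : Nat.Partition d) :
    Finset ((Fin d → Fin n) × (Fin d → Fin n)) :=
  univ.filter (fun p => (∀ m, p.1 m < p.2 m) ∧ signatureOf p.2 = lam.parts)

def Sset (n d : ℕ) (lam : Nat.Partition d) : Finset (Fin d → Fin n) :=
  univ.filter (fun b => signatureOf b = lam.parts)

def Zel (n d : ℕ) (lam : Nat.Partition d) : MonoidAlgebra ℚ (Equiv.Perm (Fin n)) :=
  ∑ p ∈ Pset n d lam, single (sw p) 1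

lemma Zel_eq (n d : ℕ) (lam : Nat.Partition d) :
    Zel n d lam = ∑ b ∈ Sset n d lam, (List.ofFn fun m => X n (b m)).prod := by
  rw [Zel, Finset.sum_finset_product_right (Pset n d lam) (Sset n d lam)
      (fun b => Fintype.piFinset (fun m => univ.filter (· < b m)))
      (by
        intro p
        simp only [Pset, Sset, mem_filter, mem_univ, true_and, Fintype.mem_piFinset]
        tauto)]
  refine Finset.sum_congr rfl fun b _ => ?_
  have h1 : ∀ a : Fin d → Fin n, single (sw (a, b)) (1:ℚ)
      = (List.ofFn fun m => single (swap (a m) (b m)) (1:ℚ)).prod := by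
    intro a
    have h := map_list_prod (MonoidAlgebra.of ℚ (Equiv.Perm (Fin n)))
      (List.ofFn fun m => swap (a m) (b m))
    rw [List.map_ofFn] at h
    simpa [sw, MonoidAlgebra.of_apply, Function.comp_def] using h
  rw [Finset.sum_congr rfl (fun a _ => h1 a),
    ← prod_ofFn_sum (fun m => univ.filter (· < b m))
      (fun m x => single (swap x (b m)) (1:ℚ))]
  rfl

lemma signatureOf_comp {n d : ℕ} (σ : Equiv.Perm (Fin n)) (b : Fin d → Fin n) :
    signatureOf (fun m => σ (b m)) = signatureOf b := by
  unfold signatureOf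
  congr 1
  have hcount : ∀ v : Fin n, (univ.filter fun m => σ (b m) = v)
      = (univ.filter fun m => b m = σ⁻¹ v) := by
    intro v
    ext m
    simp only [mem_filter, mem_univ, true_and]
    constructor
    · rintro rfl; simp
    · intro hh; rw [hh]; simp
  calc univ.val.map (fun v : Fin n => (univ.filter fun m => σ (b m) = v).card)
      = univ.val.map ((fun v : Fin n => (univ.filter fun m => b m = v).card) ∘ (⇑σ⁻¹)) :=
        Multiset.map_congr rfl (fun v _ => by rw [hcount v]; rfl)
    _ = (univ.val.map ⇑σ⁻¹).map (fun v : Fin n => (univ.filter fun m => b m = v).card) :=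
        (Multiset.map_map _ _ _).symm
    _ = univ.val.map (fun v : Fin n => (univ.filter fun m => b m = v).card) := by
        congr 1
        calc univ.val.map ⇑σ⁻¹
            = (univ.map (σ⁻¹ : Fin n ≃ Fin n).toEmbedding).val := by rw [Finset.map_val]; rfl
          _ = Finset.univ.val := by rw [Finset.map_univ_equiv]

set_option maxHeartbeats 3000000 in
lemma conj_Zel (lam : Nat.Partition d) :
    SS i * Zel (N+1) d lam * SS i = Zel (N+1) d lam := by
  rw [Zel_eq]
  have hconj : SS i * (∑ b ∈ Sset (N+1) d lam, (List.ofFn fun m => X (N+1) (b m)).prod) * SS i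
      = ∑ b ∈ Sset (N+1) d lam, (List.ofFn fun m => Xc i (b m)).prod := by
    rw [Finset.mul_sum, Finset.sum_mul]
    refine Finset.sum_congr rfl fun b _ => ?_
    show phi i _ = _
    rw [phi_list_prod, List.map_ofFn]
    rfl
  rw [hconj]
  set T := Sset (N+1) d lam with hT
  have hmem : ∀ b ∈ T, (fun m => sN i (b m)) ∈ T := by
    intro b hb
    simp only [hT, Sset, mem_filter, mem_univ, true_and] at hb ⊢
    rw [signatureOf_comp (sN i) b]
    exact hb
  have hinv : ∀ b : Fin d → Fin (N+1), (fun m => sN i (sN i (b m))) = b := by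
    intro b; funext m; simp
  have e1 : ∑ b ∈ T, (List.ofFn fun m => Xc i (b m)).prod
      = ∑ b ∈ T, (List.ofFn fun m => Xc i (sN i (b m))).prod := by
    refine Finset.sum_nbij' (fun b => fun m => sN i (b m)) (fun b => fun m => sN i (b m))
      hmem hmem (fun b _ => hinv b) (fun b _ => hinv b) (fun b _ => ?_)
    simp
  have e2 : ∑ b ∈ T, (List.ofFn fun m => X (N+1) (b m)).prod
      = ∑ b ∈ T, (List.ofFn fun m => X (N+1) (sN i (b m))).prod := by
    refine Finset.sum_nbij' (fun b => fun m => sN i (b m)) (fun b => fun m => sN i (b m))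
      hmem hmem (fun b _ => hinv b) (fun b _ => hinv b) (fun b _ => ?_)
    simp
  have key : (∑ b ∈ T, (List.ofFn fun m => Xc i (b m)).prod)
        + (∑ b ∈ T, (List.ofFn fun m => Xc i (b m)).prod)
      = (∑ b ∈ T, (List.ofFn fun m => X (N+1) (b m)).prod)
        + (∑ b ∈ T, (List.ofFn fun m => X (N+1) (b m)).prod) := by
    nth_rewrite 2 [e1]
    calc (∑ b ∈ T, (List.ofFn fun m => Xc i (b m)).prod)
          + (∑ b ∈ T, (List.ofFn fun m => Xc i (sN i (b m))).prod)
        = ∑ b ∈ T, ((List.ofFn fun m => Xc i (b m)).prod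
            + (List.ofFn fun m => Xc i (sN i (b m))).prod) := by
          rw [← Finset.sum_add_distrib]
      _ = ∑ b ∈ T, ((List.ofFn fun m => X (N+1) (b m)).prod
            + (List.ofFn fun m => X (N+1) (sN i (b m))).prod) :=
          Finset.sum_congr rfl (fun b _ => pair_id i b)
      _ = (∑ b ∈ T, (List.ofFn fun m => X (N+1) (b m)).prod)
            + (∑ b ∈ T, (List.ofFn fun m => X (N+1) (sN i (b m))).prod) :=
          Finset.sum_add_distrib
      _ = _ := by rw [← e2]
  have h2 : (2:ℚ) • (∑ b ∈ T, (List.ofFn fun m => Xc i (b m)).prod)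
      = (2:ℚ) • (∑ b ∈ T, (List.ofFn fun m => X (N+1) (b m)).prod) := by
    rw [two_smul, two_smul]
    exact key
  exact smul_right_injective _ (by norm_num : (2:ℚ) ≠ 0) h2

end Main

section Main2
variable {N d : ℕ}

lemma Zel_comm_single (lam : Nat.Partition d) (c : Equiv.Perm (Fin (N+1))) :
    single c (1:ℚ) * Zel (N+1) d lam = Zel (N+1) d lam * single c 1 := by
  have hgen : ∀ i : Fin N,
      single (sN i) (1:ℚ) * Zel (N+1) d lam = Zel (N+1) d lam * single (sN i) 1 := by
    intro i
    have h := conj_Zel i lam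
    have h2 : SS i * Zel (N+1) d lam * (SS i * SS i) = Zel (N+1) d lam * SS i := by
      rw [← mul_assoc, h]
    rwa [SS_mul_SS, mul_one] at h2
  have hc : c ∈ Submonoid.closure
      (Set.range fun i : Fin N => Equiv.swap i.castSucc i.succ) := by
    rw [Equiv.Perm.mclosure_swap_castSucc_succ]; trivial
  induction hc using Submonoid.closure_induction with
  | mem x hx => obtain ⟨i, rfl⟩ := hx; exact hgen i
  | one =>
    rw [show (single (1 : Equiv.Perm (Fin (N+1))) (1:ℚ)) = 1 from rfl, one_mul, mul_one]
  | mul x y hx hy ihx ihy =>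
    rw [show (single (x*y) (1:ℚ)) = single x 1 * single y 1 by
        rw [single_mul_single, one_mul],
      mul_assoc, ihy, ← mul_assoc, ihx, mul_assoc]

def Ffun (n d : ℕ) (lam : Nat.Partition d) (x : Equiv.Perm (Fin n)) : ℕ :=
  ((Pset n d lam).filter (fun p => sw p = x)).card

lemma Zel_apply (n d : ℕ) (lam : Nat.Partition d) (x : Equiv.Perm (Fin n)) :
    (Zel n d lam).coeff x = (Ffun n d lam x : ℚ) := by
  rw [Zel, coeff_sum, Finset.sum_apply', Ffun, ← Finset.sum_boole]
  refine Finset.sum_congr rfl fun p _ => ?_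
  rw [coeff_single, Finsupp.single_apply]

lemma Ffun_conj (lam : Nat.Partition d) (c x : Equiv.Perm (Fin (N+1))) :
    Ffun (N+1) d lam (c * x * c⁻¹) = Ffun (N+1) d lam x := by
  have h := Zel_comm_single lam c
  have h2 : (single c (1:ℚ) * Zel (N+1) d lam).coeff (c * x)
      = (Zel (N+1) d lam * single c (1:ℚ)).coeff (c * x) := by rw [h]
  rw [coeff_single_mul_apply, coeff_mul_single_apply, one_mul, mul_one,
    inv_mul_cancel_left] at h2
  rw [show c * x * c⁻¹ = (c * x) * c⁻¹ by rw [mul_assoc]]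
  have h3 : (Ffun (N+1) d lam x : ℚ) = (Ffun (N+1) d lam ((c * x) * c⁻¹) : ℚ) := by
    rw [← Zel_apply, ← Zel_apply]
    exact h2
  exact_mod_cast h3.symm

lemma pathCount_eq (n d : ℕ) (lam : Nat.Partition d) (μ : Nat.Partition n)
    (g : Equiv.Perm (Fin n)) :
    pathCount n d lam μ g
      = ∑ x ∈ univ.filter
          (fun x : Equiv.Perm (Fin n) => ((x⁻¹ * g).partition.parts = μ.parts)),
          Ffun n d lam x := by
  classical
  have hset : pathCount n d lam μ g
      = ((Pset n d lam).filter
          (fun p => ((sw p)⁻¹ * g).partition.parts = μ.parts)).card := by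
    unfold pathCount
    congr 1
    ext p
    simp only [Pset, mem_filter, mem_univ, true_and]
    simp only [sw]
    tauto
  rw [hset, Finset.card_eq_sum_card_fiberwise (f := sw)
      (t := univ.filter (fun x => ((x⁻¹ * g).partition.parts = μ.parts)))
      (fun p hp => by
        simp only [Finset.mem_coe, mem_filter, mem_univ, true_and] at hp ⊢
        exact hp.2)]
  refine Finset.sum_congr rfl fun x hx => ?_
  simp only [mem_filter, mem_univ, true_and] at hx
  rw [Ffun]
  congr 1
  ext p
  simp only [mem_filter, mem_univ, true_and, Pset]
  constructor
  · rintro ⟨⟨ha, _⟩, hb⟩; exact ⟨ha, hb⟩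
  · rintro ⟨ha, hb⟩; exact ⟨⟨ha, by rw [hb]; exact hx⟩, hb⟩

end Main2
end PCAux
end

/-- The weighted path count between conjugacy classes in the Cayley graph of `S_n`
generated by transpositions depends only on the cycle types of the endpoints. -/
theorem pathCount_eq_of_same_cycleType (n : ℕ) (hn : 1 ≤ n) (d : ℕ)
    (lam : Nat.Partition d) (μ : Nat.Partition n) (g g' : Equiv.Perm (Fin n))
    (h : g.cycleType = g'.cycleType) :
    pathCount n d lam μ g = pathCount n d lam μ g' := by
  rcases n with _ | N
  · exact absurd hn (by norm_num)
  obtain ⟨c, hc⟩ := isConj_iff.1 (Equiv.Perm.isConj_of_cycleType_eq h)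
  rw [PCAux.pathCount_eq, PCAux.pathCount_eq]
  refine Finset.sum_nbij' (fun x => c * x * c⁻¹) (fun y => c⁻¹ * y * c) ?_ ?_ ?_ ?_ ?_
  · intro x hx
    simp only [Finset.mem_filter, Finset.mem_univ, true_and] at hx ⊢
    have e : (c * x * c⁻¹)⁻¹ * g' = c * (x⁻¹ * g) * c⁻¹ := by
      rw [← hc]; group
    rw [e]
    have hp : (x⁻¹ * g).partition = (c * (x⁻¹ * g) * c⁻¹).partition :=
      Equiv.Perm.partition_eq_of_isConj.1 (isConj_iff.2 ⟨c, rfl⟩)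
    rw [← hp]
    exact hx
  · intro y hy
    simp only [Finset.mem_filter, Finset.mem_univ, true_and] at hy ⊢
    have e : (c⁻¹ * y * c)⁻¹ * g = c⁻¹ * (y⁻¹ * g') * c := by
      rw [← hc]; group
    rw [e]
    have hp : (y⁻¹ * g').partition = (c⁻¹ * (y⁻¹ * g') * c).partition :=
      Equiv.Perm.partition_eq_of_isConj.1 (isConj_iff.2 ⟨c⁻¹, by group⟩)
    rw [← hp]
    exact hy
  · intro x _; group
  · intro y _; group
  · intro x _; exact (PCAux.Ffun_conj lam c x).symm
end

section
/- Fix integers n ≥ 1 and d ≥ 0, partitions μ and ν of n, a permutation g ∈ S_n of cycle type ν, a complex number q with q^m ≠ 1 for all integers m ≥ 1, and complex numbers c = (c_1,…,c_N). For each partition λ = (λ_1 ≥ … ≥ λ_ℓ) of d, let N^λ(g,μ) denote the number of sequences (τ_1,…,τ_d) of transpositions of S_n with signature λ such that (τ_1 ⋯ τ_d)^{−1} g has cycle type μ. Then the combinatorial quantum Hurwitz number F^d(t) := (1/n!) Σ_{λ ⊢ d} (λ_1! ⋯ λ_ℓ! / d!) · N^λ(g,μ) · ∏_{i=1}^{ℓ}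 g_{λ_i}(c,q,t), regarded as a function of the complex variable t, is a polynomial in t of degree at most d. -/
/-- The combinatorial normalization `z_κ = ∏_i i^{m_i(κ)} m_i(κ)!` of a partition,
given by its multiset of parts `κ`. -/
def zClass (κ : Multiset ℕ) : ℕ :=
  κ.prod * ∏ i ∈ κ.toFinset, (κ.count i).factorial

/-- The power sum `p_κ(c) = ∏_s (c_1^{κ_s} + ⋯ + c_N^{κ_s})` of the parts `κ`. -/
noncomputable def powerSumEval {N : ℕ} (c : Fin N → ℂ) (κ : Multiset ℕ) : ℂ :=
  (κ.map fun s => ∑ i, c i ^ s).prod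

/-- The quantum-deformed complete symmetric function
`g_j(c,q,t) = Σ_{κ ⊢ j} z_κ(q,t)⁻¹ p_κ(c)`, where
`z_κ(q,t)⁻¹ = z_κ⁻¹ ∏_s (1 − t^{κ_s})/(1 − q^{κ_s})`. -/
noncomputable def gqt {N : ℕ} (c : Fin N → ℂ) (q t : ℂ) (j : ℕ) : ℂ :=
  ∑ κ : Nat.Partition j,
    (zClass κ.parts : ℂ)⁻¹ * (κ.parts.map fun s => (1 - t ^ s) / (1 - q ^ s)).prod *
      powerSumEval c κ.parts

/-- The combinatorial quantum Hurwitz number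
`F^d(t) = (1/n!) Σ_{λ ⊢ d} (λ_1!⋯λ_ℓ!/d!) N^λ(g,μ) ∏_i g_{λ_i}(c,q,t)`. -/
noncomputable def Fcomb (n d : ℕ) (μ : Nat.Partition n) (g : Equiv.Perm (Fin n))
    {N : ℕ} (c : Fin N → ℂ) (q t : ℂ) : ℂ :=
  (n.factorial : ℂ)⁻¹ * ∑ lam : Nat.Partition d,
    (((lam.parts.map Nat.factorial).prod : ℂ) / (d.factorial : ℂ)) *
      (pathCount n d lam μ g : ℂ) * (lam.parts.map fun j => gqt c q t j).prod


noncomputable def Gpoly {N : ℕ} (c : Fin N → ℂ) (q : ℂ) (j : ℕ) : Polynomial ℂ :=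
  ∑ κ : Nat.Partition j,
    Polynomial.C ((zClass κ.parts : ℂ)⁻¹ * powerSumEval c κ.parts) *
      (κ.parts.map fun s => Polynomial.C ((1 - q ^ s)⁻¹) * (1 - Polynomial.X ^ s)).prod

lemma Gpoly_natDegree_le {N : ℕ} (c : Fin N → ℂ) (q : ℂ) (j : ℕ) :
    (Gpoly c q j).natDegree ≤ j := by
  apply Polynomial.natDegree_sum_le_of_forall_le
  intro κ _
  refine Polynomial.natDegree_mul_le.trans ?_
  rw [Polynomial.natDegree_C, zero_add]
  refine (Polynomial.natDegree_multiset_prod_le _).trans ?_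
  rw [Multiset.map_map]
  refine le_trans ?_ (le_of_eq κ.parts_sum)
  refine Multiset.sum_map_le_sum _ ?_
  intro s _
  show (Polynomial.C ((1 - q ^ s)⁻¹) * (1 - Polynomial.X ^ s)).natDegree ≤ s
  refine Polynomial.natDegree_mul_le.trans ?_
  rw [Polynomial.natDegree_C, zero_add]
  exact (Polynomial.natDegree_sub_le _ _).trans (by simp)

lemma Gpoly_eval {N : ℕ} (c : Fin N → ℂ) (q t : ℂ) (j : ℕ) :
    (Gpoly c q j).eval t = gqt c q t j := by
  simp only [Gpoly, gqt, Polynomial.eval_finset_sum, Polynomial.eval_mul, Polynomial.eval_C,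
    Polynomial.eval_multiset_prod, Multiset.map_map, Function.comp,
    Polynomial.eval_sub, Polynomial.eval_one, Polynomial.eval_pow, Polynomial.eval_X]
  refine Finset.sum_congr rfl fun κ _ => ?_
  rw [show (κ.parts.map fun s => (1 - t ^ s) / (1 - q ^ s)) =
      κ.parts.map (fun s => (1 - q ^ s)⁻¹ * (1 - t ^ s)) from
    Multiset.map_congr rfl fun s _ => (div_eq_inv_mul _ _)]
  ring

/-- The combinatorial quantum Hurwitz number `F^d(t)`, regarded as a function of the
complex variable `t`, is a polynomial in `t` of degree at most `d`. -/
theorem Fcomb_polynomial_in_t (n d : ℕ) (hn : 1 ≤ n) (μ ν : Nat.Partition n)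
    (g : Equiv.Perm (Fin n)) (hg : g.partition.parts = ν.parts) (q : ℂ)
    (hq : ∀ m : ℕ, 1 ≤ m → q ^ m ≠ 1) (N : ℕ) (c : Fin N → ℂ) :
    ∃ P : Polynomial ℂ, P.degree ≤ (d : ℕ) ∧ ∀ t : ℂ, Fcomb n d μ g c q t = P.eval t := by
  refine ⟨Polynomial.C ((n.factorial : ℂ)⁻¹) * ∑ lam : Nat.Partition d,
      Polynomial.C ((((lam.parts.map Nat.factorial).prod : ℕ) : ℂ) / (d.factorial : ℂ) *
        (pathCount n d lam μ g : ℂ)) * (lam.parts.map (Gpoly c q)).prod, ?_, ?_⟩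
  · apply Polynomial.degree_le_of_natDegree_le
    refine Polynomial.natDegree_mul_le.trans ?_
    rw [Polynomial.natDegree_C, zero_add]
    apply Polynomial.natDegree_sum_le_of_forall_le
    intro lam _
    refine Polynomial.natDegree_mul_le.trans ?_
    rw [Polynomial.natDegree_C, zero_add]
    refine (Polynomial.natDegree_multiset_prod_le _).trans ?_
    rw [Multiset.map_map]
    refine le_trans ?_ (le_of_eq lam.parts_sum)
    exact Multiset.sum_map_le_sum (Polynomial.natDegree ∘ Gpoly c q)
      (fun s _ => Gpoly_natDegree_le c q s)
  · intro t
    simp only [Fcomb, Polynomial.eval_mul, Polynomial.eval_C, Polynomial.eval_finset_sum,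
      Polynomial.eval_multiset_prod, Multiset.map_map, Function.comp_def]
    refine congrArg (fun z => ((n.factorial : ℂ))⁻¹ * z) ?_
    refine Finset.sum_congr rfl fun lam _ => ?_
    rw [show lam.parts.map (fun j => Polynomial.eval t (Gpoly c q j)) =
        lam.parts.map (fun j => gqt c q t j) from
      Multiset.map_congr rfl fun j _ => Gpoly_eval c q t j]
end
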